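/- arXiv:2302.10972 — 6 statements merged into one kernel-verified Lean document; each statement's English description precedes it below -/
import Mathlib

section
/- Let X be a finite set and F a family of subsets of X (the winning sets of a Maker-Breaker game). If the sum over all F ∈ 𝓕 of 2^{-|F|} is strictly less than 1/2, then Breaker (playing second) has a winning strategy, i.e., Breaker can claim at least one element of every winning set. -/
open Finset

variable {α : Type*} [DecidableEq α]

/-- Play of a Maker-Breaker game: `MWin P n b U M` holds when, with `n` moves remaining,
`b = true` iff it is Maker's turn, `U` the unclaimed elements and `M` Maker's claimed
elements, Maker can force the final position to satisfy `P` on her claimed set. -/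
def MWin (P : Finset α → Prop) : ℕ → Bool → Finset α → Finset α → Prop
  | 0, _, _, M => P M
  | n + 1, true, U, M => ∃ e ∈ U, MWin P n false (U.erase e) (insert e M)
  | n + 1, false, U, M => ∀ e ∈ U, MWin P n true (U.erase e) M

/-- Maker (playing first) has a winning strategy on board `X` with winning sets `F`:
she can ensure that at the end of the game she has claimed all elements of some `W ∈ F`. -/
def MakerWins (X : Finset α) (F : Set (Finset α)) : Prop :=
  MWin (fun M => ∃ W ∈ F, W ⊆ M) X.card true X ∅

/-- Dual play, recording Breaker's claimed set `B`. -/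
def BWin (Q : Finset α → Prop) : ℕ → Bool → Finset α → Finset α → Prop
  | 0, _, _, B => Q B
  | n + 1, true, U, B => ∀ e ∈ U, BWin Q n false (U.erase e) B
  | n + 1, false, U, B => ∃ e ∈ U, BWin Q n true (U.erase e) (insert e B)

/-- Breaker (playing second) has a winning strategy on board `X` with winning sets `F`:
he can ensure claiming at least one element of every winning set. -/
def BreakerWins (X : Finset α) (F : Set (Finset α)) : Prop :=
  BWin (fun B => ∀ W ∈ F, ∃ e ∈ W, e ∈ B) X.card true X ∅

/-- `MWinIn P n b U M`: Maker can force, within the next `n` half-moves, a position in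
which her claimed set satisfies `P`. -/
def MWinIn (P : Finset α → Prop) : ℕ → Bool → Finset α → Finset α → Prop
  | 0, _, _, M => P M
  | n + 1, true, U, M => P M ∨ ∃ e ∈ U, MWinIn P n false (U.erase e) (insert e M)
  | n + 1, false, U, M => P M ∨ (U.Nonempty ∧ ∀ e ∈ U, MWinIn P n true (U.erase e) M)

/-- Maker (playing first) wins the game on board `X` with winning sets `F`
in at most `k` (Maker) moves. -/
def MakerWinsIn (X : Finset α) (F : Set (Finset α)) (k : ℕ) : Prop :=
  MWinIn (fun M => ∃ W ∈ F, W ⊆ M) (2 * k) true X ∅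

/-! ### Auxiliary potential-function machinery -/

noncomputable def ESpot (F : Finset (Finset α)) (U B : Finset α) : ℝ :=
  ∑ W ∈ F.filter (fun W => Disjoint W B), (2:ℝ) ^ (-((W ∩ U).card : ℤ))

noncomputable def ESdg (F : Finset (Finset α)) (U B : Finset α) (e : α) : ℝ :=
  ∑ W ∈ F.filter (fun W => Disjoint W B ∧ e ∈ W), (2:ℝ) ^ (-((W ∩ U).card : ℤ))

lemma ESdg_le_pot (F : Finset (Finset α)) (U B : Finset α) (e : α) :
    ESdg F U B e ≤ ESpot F U B := by
  apply Finset.sum_le_sum_of_subset_of_nonneg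
  · intro W hW
    rw [Finset.mem_filter] at hW ⊢
    exact ⟨hW.1, hW.2.1⟩
  · intro _ _ _; positivity

lemma ESpot_erase_maker (F : Finset (Finset α)) (U B : Finset α) {e : α} (he : e ∈ U) :
    ESpot F (U.erase e) B = ESpot F U B + ESdg F U B e := by
  classical
  unfold ESpot ESdg
  rw [← Finset.sum_filter_add_sum_filter_not (F.filter (fun W => Disjoint W B)) (fun W => e ∈ W)
      (fun W => (2:ℝ) ^ (-((W ∩ U.erase e).card : ℤ))),
      ← Finset.sum_filter_add_sum_filter_not (F.filter (fun W => Disjoint W B)) (fun W => e ∈ W)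
      (fun W => (2:ℝ) ^ (-((W ∩ U).card : ℤ))),
      Finset.filter_filter, Finset.filter_filter]
  have h1 : ∑ W ∈ F.filter (fun W => Disjoint W B ∧ ¬ e ∈ W),
      (2:ℝ) ^ (-((W ∩ U.erase e).card : ℤ))
      = ∑ W ∈ F.filter (fun W => Disjoint W B ∧ ¬ e ∈ W),
      (2:ℝ) ^ (-((W ∩ U).card : ℤ)) := by
    apply Finset.sum_congr rfl
    intro W hW
    rw [Finset.mem_filter] at hW
    congr 3
    rw [Finset.inter_erase, Finset.erase_eq_of_notMem (by simp [hW.2.2])]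
  have h2 : ∑ W ∈ F.filter (fun W => Disjoint W B ∧ e ∈ W),
      (2:ℝ) ^ (-((W ∩ U.erase e).card : ℤ))
      = ∑ W ∈ F.filter (fun W => Disjoint W B ∧ e ∈ W),
      2 * (2:ℝ) ^ (-((W ∩ U).card : ℤ)) := by
    apply Finset.sum_congr rfl
    intro W hW
    rw [Finset.mem_filter] at hW
    have heWU : e ∈ W ∩ U := Finset.mem_inter.2 ⟨hW.2.2, he⟩
    have h3 : (W ∩ U.erase e) = (W ∩ U).erase e := Finset.inter_erase _ _ _
    have hc : (W ∩ U).card = ((W ∩ U).erase e).card + 1 := by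
      rw [Finset.card_erase_of_mem heWU]
      have := Finset.card_pos.2 ⟨e, heWU⟩
      omega
    rw [h3, hc]
    push_cast
    rw [neg_add, zpow_add₀ (by norm_num : (2:ℝ) ≠ 0)]
    norm_num
    ring
  rw [h1, h2]
  simp only [two_mul, add_mul, one_mul, Finset.sum_add_distrib]
  ring
  
lemma ESpot_erase_breaker (F : Finset (Finset α)) (U B : Finset α) (f : α) :
    ESpot F (U.erase f) (insert f B) = ESpot F U B - ESdg F U B f := by
  classical
  unfold ESpot ESdg
  have hsplit := Finset.sum_filter_add_sum_filter_not (F.filter (fun W => Disjoint W B))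
      (fun W => f ∈ W) (fun W => (2:ℝ) ^ (-((W ∩ U).card : ℤ)))
  rw [Finset.filter_filter, Finset.filter_filter] at hsplit
  have hLHS : ∑ W ∈ F.filter (fun W => Disjoint W (insert f B)),
      (2:ℝ) ^ (-((W ∩ U.erase f).card : ℤ))
      = ∑ W ∈ F.filter (fun W => Disjoint W B ∧ ¬ f ∈ W),
      (2:ℝ) ^ (-((W ∩ U).card : ℤ)) := by
    rw [show (F.filter (fun W => Disjoint W (insert f B)))
        = F.filter (fun W => Disjoint W B ∧ ¬ f ∈ W) by
      apply Finset.filter_congr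
      intro W _
      simp [Finset.disjoint_insert_right, and_comm]]
    apply Finset.sum_congr rfl
    intro W hW
    rw [Finset.mem_filter] at hW
    congr 3
    rw [Finset.inter_erase, Finset.erase_eq_of_notMem (by simp [hW.2.2])]
  rw [hLHS]
  linarith [hsplit]

lemma ESdg_erase_le (F : Finset (Finset α)) (U B : Finset α) (f e : α) :
    ESdg F (U.erase f) (insert f B) e ≤ ESdg F U B e := by
  classical
  unfold ESdg
  have h1 : ∑ W ∈ F.filter (fun W => Disjoint W (insert f B) ∧ e ∈ W),
      (2:ℝ) ^ (-((W ∩ U.erase f).card : ℤ))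
      = ∑ W ∈ F.filter (fun W => Disjoint W (insert f B) ∧ e ∈ W),
      (2:ℝ) ^ (-((W ∩ U).card : ℤ)) := by
    apply Finset.sum_congr rfl
    intro W hW
    rw [Finset.mem_filter] at hW
    have hf : f ∉ W := (Finset.disjoint_insert_right.1 hW.2.1).1
    congr 3
    rw [Finset.inter_erase, Finset.erase_eq_of_notMem (by simp [hf])]
  rw [h1]
  apply Finset.sum_le_sum_of_subset_of_nonneg
  · intro W hW
    rw [Finset.mem_filter] at hW ⊢
    exact ⟨hW.1, (Finset.disjoint_insert_right.1 hW.2.1).2, hW.2.2⟩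
  · intro _ _ _; positivity

lemma ESpot_final (F : Finset (Finset α)) (B : Finset α) (h : ESpot F ∅ B < 1) :
    ∀ W ∈ F, ∃ e ∈ W, e ∈ B := by
  intro W hW
  by_contra hcon
  push_neg at hcon
  have hdisj : Disjoint W B := Finset.disjoint_left.2 hcon
  have hmem : W ∈ F.filter (fun W => Disjoint W B) := Finset.mem_filter.2 ⟨hW, hdisj⟩
  have hle := Finset.single_le_sum (f := fun W => (2:ℝ) ^ (-((W ∩ (∅:Finset α)).card : ℤ)))
      (fun _ _ => by positivity) hmem
  unfold ESpot at h
  simp only [Finset.inter_empty, Finset.card_empty, Nat.cast_zero, neg_zero, zpow_zero] at hle h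
  linarith

/-- Breaker wins from any position (Breaker to move) with potential `< 1`. -/
lemma ESkey (F : Finset (Finset α)) :
    ∀ n U B, U.card = n → ESpot F U B < 1 →
      BWin (fun B => ∀ W ∈ F, ∃ e ∈ W, e ∈ B) n false U B := by
  intro n
  induction n using Nat.strong_induction_on with
  | _ n ih =>
    intro U B hcard hpot
    match n, hcard with
    | 0, hcard =>
      show ∀ W ∈ F, ∃ e ∈ W, e ∈ B
      have hU : U = ∅ := Finset.card_eq_zero.1 hcard
      exact ESpot_final F B (hU ▸ hpot)
    | (m+1), hcard =>
      have hne : U.Nonempty := Finset.card_pos.1 (by omega)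
      obtain ⟨f, hfU, hfmax⟩ := Finset.exists_max_image U (ESdg F U B) hne
      refine ⟨f, hfU, ?_⟩
      have hpot' : ESpot F (U.erase f) (insert f B) < 1 - ESdg F U B f := by
        rw [ESpot_erase_breaker]; linarith
      match m with
      | 0 =>
        show ∀ W ∈ F, ∃ e ∈ W, e ∈ insert f B
        have hU : U.erase f = ∅ := by
          rw [← Finset.card_eq_zero, Finset.card_erase_of_mem hfU]; omega
        have hd : 0 ≤ ESdg F U B f := Finset.sum_nonneg fun _ _ => by positivity
        exact ESpot_final F (insert f B) (by rw [← hU]; linarith)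
      | (k+1) =>
        intro e he
        have heU : e ∈ U := Finset.mem_of_mem_erase he
        have hef : e ≠ f := Finset.ne_of_mem_erase he
        apply ih k (by omega) _ _ (by
          rw [Finset.card_erase_of_mem he, Finset.card_erase_of_mem hfU]; omega)
        rw [ESpot_erase_maker F (U.erase f) (insert f B) he]
        have h1 := ESdg_erase_le F U B f e
        have h2 := hfmax e heU
        linarith

/-- **Erdős–Selfridge criterion.** If `X` is a finite board and `F` a (finite) family of
winning subsets of `X` with `∑_{W ∈ F} 2^{-|W|} < 1/2`, then Breaker, playing second,
has a winning strategy: he can claim at least one element of every winning set. -/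
theorem stmt0 {α : Type*} [DecidableEq α] (X : Finset α) (F : Finset (Finset α))
    (hFX : ∀ W ∈ F, W ⊆ X)
    (hsum : ∑ W ∈ F, (2 : ℝ) ^ (-(W.card : ℤ)) < 1 / 2) :
    BreakerWins X {W | W ∈ F} := by
  classical
  have hQ : (fun (B : Finset α) => ∀ W ∈ ({W | W ∈ F} : Set (Finset α)), ∃ e ∈ W, e ∈ B)
      = (fun (B : Finset α) => ∀ W ∈ F, ∃ e ∈ W, e ∈ B) := by
    funext B; simp
  have hpotX : ESpot F X ∅ < 1/2 := by
    unfold ESpot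
    have h1 : F.filter (fun W => Disjoint W (∅ : Finset α)) = F := by
      simp
    rw [h1]
    calc ∑ W ∈ F, (2:ℝ) ^ (-((W ∩ X).card : ℤ))
        = ∑ W ∈ F, (2:ℝ) ^ (-(W.card : ℤ)) := by
          apply Finset.sum_congr rfl
          intro W hW
          rw [Finset.inter_eq_left.2 (hFX W hW)]
      _ < 1/2 := hsum
  unfold BreakerWins
  rw [hQ]
  match hX : X.card with
  | 0 =>
    show ∀ W ∈ F, ∃ e ∈ W, e ∈ (∅ : Finset α)
    have hXe : X = ∅ := Finset.card_eq_zero.1 hX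
    subst hXe
    exact ESpot_final F ∅ (by linarith)
  | (m+1) =>
    intro e he
    apply ESkey F m _ _ (by rw [Finset.card_erase_of_mem he]; omega)
    rw [ESpot_erase_maker _ _ _ he]
    have := ESdg_le_pot F X (∅ : Finset α) e
    linarith
end

section
/- Let (E₁, 𝓕₁) and (E₂, 𝓕₂) be two Maker-Breaker games. If Maker has a winning strategy in one of the two games, then Maker has a winning strategy in the union game (E₁ ∪ E₂, 𝓕₁ ∪ 𝓕₂). Moreover, if E₁ ∩ E₂ = ∅, the converse holds: if Maker wins the union game, she wins at least one of the two component games. -/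
open Finset

variable {α : Type*} [DecidableEq α]

lemma MWin_zero {P : Finset α → Prop} {b : Bool} {U M : Finset α} :
    MWin P 0 b U M ↔ P M := by cases b <;> rfl

lemma MWin_true {P : Finset α → Prop} {n : ℕ} {U M : Finset α} :
    MWin P (n+1) true U M ↔ ∃ e ∈ U, MWin P n false (U.erase e) (insert e M) := Iff.rfl

lemma MWin_false {P : Finset α → Prop} {n : ℕ} {U M : Finset α} :
    MWin P (n+1) false U M ↔ ∀ e ∈ U, MWin P n true (U.erase e) M := Iff.rfl

lemma mwin_mono_pred {P Q : Finset α → Prop} (h : ∀ M, P M → Q M) :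
    ∀ (n : ℕ) (b : Bool) (U M : Finset α), MWin P n b U M → MWin Q n b U M := by
  intro n
  induction n with
  | zero => intro b U M hw; exact MWin_zero.2 (h M (MWin_zero.1 hw))
  | succ n ih =>
    intro b U M hw
    cases b with
    | true => obtain ⟨e, he, hw⟩ := hw; exact ⟨e, he, ih false _ _ hw⟩
    | false => exact fun e he => ih true _ _ (hw e he)

lemma mwin_of_holds {P : Finset α → Prop} (hP : ∀ ⦃A B : Finset α⦄, A ⊆ B → P A → P B) :
    ∀ (n : ℕ) (b : Bool) (U M : Finset α), U.card = n → P M → MWin P n b U M := by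
  intro n
  induction n with
  | zero => intro b U M _ h; exact MWin_zero.2 h
  | succ n ih =>
    intro b U M hc h
    cases b with
    | true =>
      obtain ⟨e, he⟩ := card_pos.1 (by omega : 0 < U.card)
      exact ⟨e, he, ih false _ _ (by rw [card_erase_of_mem he]; omega)
        (hP (subset_insert e M) h)⟩
    | false =>
      intro e he
      exact ih true _ _ (by rw [card_erase_of_mem he]; omega) h

lemma mwin_endgame {P : Finset α → Prop} (hP : ∀ ⦃A B : Finset α⦄, A ⊆ B → P A → P B) :
    ∀ (n : ℕ) (U Mb M : Finset α), U.card = n → Mb ⊆ M → U ⊆ M →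
      MWin P U.card false U Mb → P M := by
  intro n
  induction n using Nat.strong_induction_on with
  | _ n ih =>
  intro U Mb M hc hMb hUM hw
  rcases U.eq_empty_or_nonempty with rfl | ⟨d, hd⟩
  · rw [card_empty] at hw
    exact hP hMb (MWin_zero.1 hw)
  · have h1 : 0 < U.card := card_pos.2 ⟨d, hd⟩
    obtain ⟨u, hu⟩ : ∃ u, U.card = u + 1 := ⟨U.card - 1, by omega⟩
    rw [hu] at hw
    have hw2 := hw d hd
    rcases (U.erase d).eq_empty_or_nonempty with he | hne
    · rw [he] at hw2
      have : u = 0 := by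
        have := card_erase_of_mem hd
        rw [he, card_empty] at this
        omega
      rw [this] at hw2
      exact hP hMb (MWin_zero.1 hw2)
    · -- u ≥ 1, Maker's simulated move e, owned cell
      have hcu : (U.erase d).card = u := by rw [card_erase_of_mem hd]; omega
      have h2 : 0 < u := by rw [← hcu]; exact card_pos.2 hne
      obtain ⟨u', hu'⟩ : ∃ u', u = u' + 1 := ⟨u - 1, by omega⟩
      rw [hu'] at hw2
      obtain ⟨e, he, hw3⟩ := MWin_true.1 hw2
      -- hw3 : MWin P u' false ((U.erase d).erase e) (insert e Mb)
      have heU : e ∈ U := mem_of_mem_erase he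
      have hc' : ((U.erase d).erase e).card = u' := by
        rw [card_erase_of_mem he, hcu]; omega
      refine ih u' (by omega) _ (insert e Mb) M hc'
        (insert_subset (hUM heU) hMb)
        (fun x hx => hUM (mem_of_mem_erase (mem_of_mem_erase hx))) ?_
      rw [hc']; exact hw3

/-- Maker simulation: extra board elements and extra claimed elements (and even
an extra tempo) never hurt Maker. -/
lemma maker_sim {P : Finset α → Prop} (hP : ∀ ⦃A B : Finset α⦄, A ⊆ B → P A → P B) :
    ∀ (k : ℕ) (U V Mb M : Finset α), U.card + V.card ≤ k →
      Mb ⊆ M → U ⊆ V ∪ M → (∀ x ∈ U, x ∉ Mb) → (∀ x ∈ V, x ∉ M) →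
      ((MWin P U.card true U Mb → MWin P V.card true V M) ∧
       (MWin P U.card false U Mb → MWin P V.card false V M) ∧
       (MWin P U.card false U Mb → MWin P V.card true V M)) := by
  intro k
  induction k using Nat.strong_induction_on with
  | _ k IH =>
  intro U V Mb M hk hMb hUV hUMb hVM
  refine ⟨?_, ?_, ?_⟩
  · -- G1 : true → true
    intro hw
    rcases U.eq_empty_or_nonempty with rfl | hUne
    · rw [card_empty] at hw
      exact mwin_of_holds hP _ true V M rfl (hP hMb (MWin_zero.1 hw))
    · have h1 : 0 < U.card := card_pos.2 hUne
      obtain ⟨u, hu⟩ : ∃ u, U.card = u + 1 := ⟨U.card - 1, by omega⟩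
      rw [hu] at hw
      obtain ⟨e, heU, hw⟩ := MWin_true.1 hw
      have hue : (U.erase e).card = u := by rw [card_erase_of_mem heU]; omega
      by_cases heV : e ∈ V
      · -- play e for real
        have h2 : 0 < V.card := card_pos.2 ⟨e, heV⟩
        obtain ⟨v, hv⟩ : ∃ v, V.card = v + 1 := ⟨V.card - 1, by omega⟩
        have hve : (V.erase e).card = v := by rw [card_erase_of_mem heV]; omega
        have hsub1 : U.erase e ⊆ V.erase e ∪ insert e M := by
          intro x hx
          rcases mem_erase.1 hx with ⟨hxe, hxU⟩
          rcases mem_union.1 (hUV hxU) with hxV | hxM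
          · exact mem_union_left _ (mem_erase.2 ⟨hxe, hxV⟩)
          · exact mem_union_right _ (mem_insert_of_mem hxM)
        have hsub2 : ∀ x ∈ U.erase e, x ∉ insert e Mb := by
          intro x hx
          rcases mem_erase.1 hx with ⟨hxe, hxU⟩
          simp only [mem_insert, not_or]
          exact ⟨hxe, hUMb x hxU⟩
        have hsub3 : ∀ x ∈ V.erase e, x ∉ insert e M := by
          intro x hx
          rcases mem_erase.1 hx with ⟨hxe, hxV⟩
          simp only [mem_insert, not_or]
          exact ⟨hxe, hVM x hxV⟩
        have key := (IH ((U.erase e).card + (V.erase e).card)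
          (by rw [hue, hve]; omega) (U.erase e) (V.erase e)
          (insert e Mb) (insert e M) le_rfl
          (insert_subset_insert e hMb) hsub1 hsub2 hsub3).2.1
        have hw' : MWin P (U.erase e).card false (U.erase e) (insert e Mb) := by
          rw [hue]; exact hw
        have hres := key hw'
        rw [hve] at hres
        rw [hv]
        exact MWin_true.2 ⟨e, heV, hres⟩
      · -- e is already owned by Maker: advance simulation for free
        have heM : e ∈ M := by
          rcases mem_union.1 (hUV heU) with h | h
          · exact absurd h heV
          · exact h
        have hsub1 : U.erase e ⊆ V ∪ M := fun x hx => hUV (mem_of_mem_erase hx)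
        have hsub2 : ∀ x ∈ U.erase e, x ∉ insert e Mb := by
          intro x hx
          rcases mem_erase.1 hx with ⟨hxe, hxU⟩
          simp only [mem_insert, not_or]
          exact ⟨hxe, hUMb x hxU⟩
        have key := (IH ((U.erase e).card + V.card) (by rw [hue]; omega)
          (U.erase e) V (insert e Mb) M le_rfl
          (insert_subset heM hMb) hsub1 hsub2 hVM).2.2
        have hw' : MWin P (U.erase e).card false (U.erase e) (insert e Mb) := by
          rw [hue]; exact hw
        exact key hw'
  · -- G2 : false → false
    intro hw
    rcases V.eq_empty_or_nonempty with rfl | hVne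
    · rw [card_empty]
      refine MWin_zero.2 (mwin_endgame hP U.card U Mb M rfl hMb ?_ hw)
      intro x hx
      rcases mem_union.1 (hUV hx) with h | h
      · exact absurd h (notMem_empty x)
      · exact h
    · have h2 : 0 < V.card := card_pos.2 hVne
      obtain ⟨v, hv⟩ : ∃ v, V.card = v + 1 := ⟨V.card - 1, by omega⟩
      rw [hv]
      refine MWin_false.2 ?_
      intro f hfV
      have hvf : (V.erase f).card = v := by rw [card_erase_of_mem hfV]; omega
      by_cases hfU : f ∈ U
      · -- feed f to the simulation as Breaker's move
        have h1 : 0 < U.card := card_pos.2 ⟨f, hfU⟩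
        obtain ⟨u, hu⟩ : ∃ u, U.card = u + 1 := ⟨U.card - 1, by omega⟩
        rw [hu] at hw
        have hw2 := MWin_false.1 hw f hfU
        have huf : (U.erase f).card = u := by rw [card_erase_of_mem hfU]; omega
        have hsub1 : U.erase f ⊆ V.erase f ∪ M := by
          intro x hx
          rcases mem_erase.1 hx with ⟨hxf, hxU⟩
          rcases mem_union.1 (hUV hxU) with hxV | hxM
          · exact mem_union_left _ (mem_erase.2 ⟨hxf, hxV⟩)
          · exact mem_union_right _ hxM
        have key := (IH ((U.erase f).card + (V.erase f).card)
          (by rw [huf, hvf]; omega) (U.erase f) (V.erase f) Mb M le_rfl hMb hsub1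
          (fun x hx => hUMb x (mem_of_mem_erase hx))
          (fun x hx => hVM x (mem_of_mem_erase hx))).1
        have hw' : MWin P (U.erase f).card true (U.erase f) Mb := by
          rw [huf]; exact hw2
        have hres := key hw'
        rw [hvf] at hres
        exact hres
      · -- Breaker moved outside the simulated board: Maker gains a tempo
        have hsub1 : U ⊆ V.erase f ∪ M := by
          intro x hxU
          rcases mem_union.1 (hUV hxU) with hxV | hxM
          · exact mem_union_left _ (mem_erase.2 ⟨fun h => hfU (h ▸ hxU), hxV⟩)
          · exact mem_union_right _ hxM
        have key := (IH (U.card + (V.erase f).card) (by rw [hvf]; omega)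
          U (V.erase f) Mb M le_rfl hMb hsub1 hUMb
          (fun x hx => hVM x (mem_of_mem_erase hx))).2.2
        have hres := key hw
        rw [hvf] at hres
        exact hres
  · -- G3 : false (sim) → true (real) : Maker has a spare tempo
    intro hw
    rcases V.eq_empty_or_nonempty with rfl | hVne
    · rw [card_empty]
      refine MWin_zero.2 (mwin_endgame hP U.card U Mb M rfl hMb ?_ hw)
      intro x hx
      rcases mem_union.1 (hUV hx) with h | h
      · exact absurd h (notMem_empty x)
      · exact h
    · obtain ⟨e, heV⟩ := hVne
      have h2 : 0 < V.card := card_pos.2 ⟨e, heV⟩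
      obtain ⟨v, hv⟩ : ∃ v, V.card = v + 1 := ⟨V.card - 1, by omega⟩
      have hve : (V.erase e).card = v := by rw [card_erase_of_mem heV]; omega
      have hsub1 : U ⊆ V.erase e ∪ insert e M := by
        intro x hxU
        rcases mem_union.1 (hUV hxU) with hxV | hxM
        · by_cases hxe : x = e
          · exact mem_union_right _ (hxe ▸ mem_insert_self e M)
          · exact mem_union_left _ (mem_erase.2 ⟨hxe, hxV⟩)
        · exact mem_union_right _ (mem_insert_of_mem hxM)
      have hsub3 : ∀ x ∈ V.erase e, x ∉ insert e M := by
        intro x hx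
        rcases mem_erase.1 hx with ⟨hxe, hxV⟩
        simp only [mem_insert, not_or]
        exact ⟨hxe, hVM x hxV⟩
      have key := (IH (U.card + (V.erase e).card) (by rw [hve]; omega)
        U (V.erase e) Mb (insert e M) le_rfl
        (hMb.trans (subset_insert e M)) hsub1 hUMb hsub3).2.1
      have hres := key hw
      rw [hve] at hres
      rw [hv]
      exact MWin_true.2 ⟨e, heV, hres⟩

/-- If Breaker can prevent `Q` from the position `(t, U, M)`, then `Q M` fails already. -/
lemma mwin_ex {Q : Finset α → Prop} (hQ : ∀ ⦃A B : Finset α⦄, A ⊆ B → Q A → Q B) :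
    ∀ (n : ℕ) (t : Bool) (U M : Finset α), U.card = n →
      ¬ MWin Q U.card t U M → ¬ Q M := by
  intro n
  induction n with
  | zero =>
    intro t U M hc h hq
    exact h (by rw [hc]; exact MWin_zero.2 hq)
  | succ n ih =>
    intro t U M hc h hq
    have hU : U.Nonempty := card_pos.1 (by omega)
    cases t with
    | true =>
      obtain ⟨d, hd⟩ := hU
      have hcd : (U.erase d).card = n := by rw [card_erase_of_mem hd]; omega
      refine ih false (U.erase d) (insert d M) hcd ?_ (hQ (subset_insert d M) hq)
      intro hw
      apply h
      rw [hc]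
      exact MWin_true.2 ⟨d, hd, by rw [hcd] at hw; exact hw⟩
    | false =>
      apply h
      rw [hc]
      refine MWin_false.2 ?_
      intro e he
      have hce : (U.erase e).card = n := by rw [card_erase_of_mem he]; omega
      by_contra h'
      exact ih true (U.erase e) M hce (by rw [hce]; exact h') hq

/-- Breaker simulation for the disjoint union of two games: if Breaker wins both
components, he wins the union. -/
lemma breaker_sim :
    ∀ (k : ℕ) (Q₁ Q₂ P : Finset α → Prop) (E₁ E₂ U₁ U₂ M₁ M₂ V M : Finset α) (t : Bool),
      (∀ ⦃A B : Finset α⦄, A ⊆ B → Q₁ A → Q₁ B) →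
      (∀ ⦃A B : Finset α⦄, A ⊆ B → Q₂ A → Q₂ B) →
      (∀ N : Finset α, P N → Q₁ (N ∩ E₁) ∨ Q₂ (N ∩ E₂)) →
      Disjoint E₁ E₂ →
      2 * V.card + U₁.card + U₂.card ≤ k →
      U₁ ⊆ E₁ → U₂ ⊆ E₂ → V ⊆ E₁ ∪ E₂ →
      V ∩ E₁ ⊆ U₁ → V ∩ E₂ ⊆ U₂ →
      M ∩ E₁ ⊆ M₁ → M ∩ E₂ ⊆ M₂ →
      (∀ x ∈ U₁, x ∉ M) → (∀ x ∈ U₂, x ∉ M) →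
      ¬ MWin Q₁ U₁.card t U₁ M₁ → ¬ MWin Q₂ U₂.card true U₂ M₂ →
      ¬ MWin P V.card t V M := by
  intro k
  induction k using Nat.strong_induction_on with
  | _ k IH =>
  intro Q₁ Q₂ P E₁ E₂ U₁ U₂ M₁ M₂ V M t hQ₁ hQ₂ hP hd hk hU₁ hU₂ hV hVU₁ hVU₂ hM₁ hM₂ hUM₁ hUM₂ hc₁ hc₂
  have hdis : ∀ x, x ∈ E₁ → x ∈ E₂ → False := fun x hx1 hx2 => by
    have := hd.le_bot (mem_inter.2 ⟨hx1, hx2⟩)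
    simp at this
  rcases V.eq_empty_or_nonempty with rfl | hVne
  · -- terminal position: extract failure of both Q's
    intro hw
    rw [card_empty] at hw
    have hPM : P M := MWin_zero.1 hw
    rcases hP M hPM with h | h
    · exact mwin_ex hQ₁ U₁.card t U₁ M₁ rfl hc₁ (hQ₁ hM₁ h)
    · exact mwin_ex hQ₂ U₂.card true U₂ M₂ rfl hc₂ (hQ₂ hM₂ h)
  · have h2 : 0 < V.card := card_pos.2 hVne
    obtain ⟨v, hv⟩ : ∃ v, V.card = v + 1 := ⟨V.card - 1, by omega⟩
    cases t with
    | true =>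
      -- Maker to move in the union game
      intro hw
      rw [hv] at hw
      obtain ⟨e, heV, hw⟩ := MWin_true.1 hw
      have hve : (V.erase e).card = v := by rw [card_erase_of_mem heV]; omega
      rcases mem_union.1 (hV heV) with he1 | he2
      · -- Maker moved in E₁ : feed it to simulation 1
        have heU₁ : e ∈ U₁ := hVU₁ (mem_inter.2 ⟨heV, he1⟩)
        have h1 : 0 < U₁.card := card_pos.2 ⟨e, heU₁⟩
        obtain ⟨u, hu⟩ : ∃ u, U₁.card = u + 1 := ⟨U₁.card - 1, by omega⟩
        have hue : (U₁.erase e).card = u := by rw [card_erase_of_mem heU₁]; omega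
        have hc₁' : ¬ MWin Q₁ (U₁.erase e).card false (U₁.erase e) (insert e M₁) := by
          intro hx
          apply hc₁
          rw [hu]
          exact MWin_true.2 ⟨e, heU₁, by rw [hue] at hx; exact hx⟩
        have key := IH (2 * (V.erase e).card + (U₁.erase e).card + U₂.card)
          (by rw [hve, hue]; omega) Q₁ Q₂ P E₁ E₂ (U₁.erase e) U₂ (insert e M₁) M₂
          (V.erase e) (insert e M) false hQ₁ hQ₂ hP hd le_rfl
          ((erase_subset e U₁).trans hU₁) hU₂ ((erase_subset e V).trans hV)
          ?_ ?_ ?_ ?_ ?_ ?_ hc₁' hc₂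
        · rw [hve] at key; exact key hw
        · intro x hx
          rcases mem_inter.1 hx with ⟨hxV, hxE⟩
          exact mem_erase.2 ⟨(mem_erase.1 hxV).1, hVU₁ (mem_inter.2 ⟨mem_of_mem_erase hxV, hxE⟩)⟩
        · intro x hx
          rcases mem_inter.1 hx with ⟨hxV, hxE⟩
          exact hVU₂ (mem_inter.2 ⟨mem_of_mem_erase hxV, hxE⟩)
        · intro x hx
          rcases mem_inter.1 hx with ⟨hxM, hxE⟩
          rcases mem_insert.1 hxM with rfl | hxM
          · exact mem_insert_self _ _
          · exact mem_insert_of_mem (hM₁ (mem_inter.2 ⟨hxM, hxE⟩))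
        · intro x hx
          rcases mem_inter.1 hx with ⟨hxM, hxE⟩
          rcases mem_insert.1 hxM with rfl | hxM
          · exact (hdis x he1 hxE).elim
          · exact hM₂ (mem_inter.2 ⟨hxM, hxE⟩)
        · intro x hx
          rcases mem_erase.1 hx with ⟨hxe, hxU⟩
          simp only [mem_insert, not_or]
          exact ⟨hxe, hUM₁ x hxU⟩
        · intro x hx
          simp only [mem_insert, not_or]
          refine ⟨?_, hUM₂ x hx⟩
          rintro rfl
          exact hdis x he1 (hU₂ hx)
      · -- Maker moved in E₂ : feed it to simulation 2 (swap the roles)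
        have heU₂ : e ∈ U₂ := hVU₂ (mem_inter.2 ⟨heV, he2⟩)
        have h1 : 0 < U₂.card := card_pos.2 ⟨e, heU₂⟩
        obtain ⟨u, hu⟩ : ∃ u, U₂.card = u + 1 := ⟨U₂.card - 1, by omega⟩
        have hue : (U₂.erase e).card = u := by rw [card_erase_of_mem heU₂]; omega
        have hc₂' : ¬ MWin Q₂ (U₂.erase e).card false (U₂.erase e) (insert e M₂) := by
          intro hx
          apply hc₂
          rw [hu]
          exact MWin_true.2 ⟨e, heU₂, by rw [hue] at hx; exact hx⟩
        have key := IH (2 * (V.erase e).card + (U₂.erase e).card + U₁.card)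
          (by rw [hve, hue]; omega) Q₂ Q₁ P E₂ E₁ (U₂.erase e) U₁ (insert e M₂) M₁
          (V.erase e) (insert e M) false hQ₂ hQ₁ (fun N h => (hP N h).symm) hd.symm le_rfl
          ((erase_subset e U₂).trans hU₂) hU₁
          (by rw [union_comm] at hV; exact (erase_subset e V).trans hV)
          ?_ ?_ ?_ ?_ ?_ ?_ hc₂' hc₁
        · rw [hve] at key; exact key hw
        · intro x hx
          rcases mem_inter.1 hx with ⟨hxV, hxE⟩
          exact mem_erase.2 ⟨(mem_erase.1 hxV).1, hVU₂ (mem_inter.2 ⟨mem_of_mem_erase hxV, hxE⟩)⟩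
        · intro x hx
          rcases mem_inter.1 hx with ⟨hxV, hxE⟩
          exact hVU₁ (mem_inter.2 ⟨mem_of_mem_erase hxV, hxE⟩)
        · intro x hx
          rcases mem_inter.1 hx with ⟨hxM, hxE⟩
          rcases mem_insert.1 hxM with rfl | hxM
          · exact mem_insert_self _ _
          · exact mem_insert_of_mem (hM₂ (mem_inter.2 ⟨hxM, hxE⟩))
        · intro x hx
          rcases mem_inter.1 hx with ⟨hxM, hxE⟩
          rcases mem_insert.1 hxM with rfl | hxM
          · exact (hdis x hxE he2).elim
          · exact hM₁ (mem_inter.2 ⟨hxM, hxE⟩)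
        · intro x hx
          rcases mem_erase.1 hx with ⟨hxe, hxU⟩
          simp only [mem_insert, not_or]
          exact ⟨hxe, hUM₂ x hxU⟩
        · intro x hx
          simp only [mem_insert, not_or]
          refine ⟨?_, hUM₁ x hx⟩
          rintro rfl
          exact hdis x (hU₁ hx) he2
    | false =>
      -- Breaker to move in the union game
      intro hw
      rw [hv] at hw
      have hw' := MWin_false.1 hw
      rcases U₁.eq_empty_or_nonempty with rfl | hU₁ne
      · -- simulation 1 finished: Breaker plays an arbitrary free move
        have hc₁t : ¬ MWin Q₁ (∅ : Finset α).card true (∅ : Finset α) M₁ := by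
          rw [card_empty]
          intro hx
          exact hc₁ (by rw [card_empty]; exact MWin_zero.2 (MWin_zero.1 hx))
        obtain ⟨g, hg⟩ := hVne
        have hvg : (V.erase g).card = v := by rw [card_erase_of_mem hg]; omega
        have key := IH (2 * (V.erase g).card + (∅ : Finset α).card + U₂.card)
          (by rw [hvg, card_empty]; omega) Q₁ Q₂ P E₁ E₂ ∅ U₂ M₁ M₂
          (V.erase g) M true hQ₁ hQ₂ hP hd le_rfl
          (empty_subset _) hU₂ ((erase_subset g V).trans hV)
          (fun x hx => hVU₁ (mem_inter.2 ⟨mem_of_mem_erase (mem_inter.1 hx).1, (mem_inter.1 hx).2⟩))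
          (fun x hx => hVU₂ (mem_inter.2 ⟨mem_of_mem_erase (mem_inter.1 hx).1, (mem_inter.1 hx).2⟩))
          hM₁ hM₂ hUM₁ hUM₂ hc₁t hc₂
        rw [hvg] at key
        exact key (hw' g hg)
      · -- simulation 1 still alive: consult it
        have h1 : 0 < U₁.card := card_pos.2 hU₁ne
        obtain ⟨u, hu⟩ : ∃ u, U₁.card = u + 1 := ⟨U₁.card - 1, by omega⟩
        have hex : ∃ f ∈ U₁, ¬ MWin Q₁ u true (U₁.erase f) M₁ := by
          by_contra hcon
          push_neg at hcon
          apply hc₁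
          rw [hu]
          exact MWin_false.2 hcon
        obtain ⟨f, hfU₁, hcf⟩ := hex
        have huf : (U₁.erase f).card = u := by rw [card_erase_of_mem hfU₁]; omega
        have hcf' : ¬ MWin Q₁ (U₁.erase f).card true (U₁.erase f) M₁ := by
          rw [huf]; exact hcf
        by_cases hfV : f ∈ V
        · -- Breaker answers with the simulated response f
          have hvf : (V.erase f).card = v := by rw [card_erase_of_mem hfV]; omega
          have key := IH (2 * (V.erase f).card + (U₁.erase f).card + U₂.card)
            (by rw [hvf, huf]; omega) Q₁ Q₂ P E₁ E₂ (U₁.erase f) U₂ M₁ M₂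
            (V.erase f) M true hQ₁ hQ₂ hP hd le_rfl
            ((erase_subset f U₁).trans hU₁) hU₂ ((erase_subset f V).trans hV)
            ?_ ?_ hM₁ hM₂ (fun x hx => hUM₁ x (mem_of_mem_erase hx)) hUM₂ hcf' hc₂
          · rw [hvf] at key; exact key (hw' f hfV)
          · intro x hx
            rcases mem_inter.1 hx with ⟨hxV, hxE⟩
            exact mem_erase.2 ⟨(mem_erase.1 hxV).1, hVU₁ (mem_inter.2 ⟨mem_of_mem_erase hxV, hxE⟩)⟩
          · intro x hx
            rcases mem_inter.1 hx with ⟨hxV, hxE⟩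
            exact hVU₂ (mem_inter.2 ⟨mem_of_mem_erase hxV, hxE⟩)
        · -- simulated response is a cell Breaker already owns: free move
          obtain ⟨g, hg⟩ := hVne
          have hvg : (V.erase g).card = v := by rw [card_erase_of_mem hg]; omega
          have key := IH (2 * (V.erase g).card + (U₁.erase f).card + U₂.card)
            (by rw [hvg, huf]; omega) Q₁ Q₂ P E₁ E₂ (U₁.erase f) U₂ M₁ M₂
            (V.erase g) M true hQ₁ hQ₂ hP hd le_rfl
            ((erase_subset f U₁).trans hU₁) hU₂ ((erase_subset g V).trans hV)
            ?_ ?_ hM₁ hM₂ (fun x hx => hUM₁ x (mem_of_mem_erase hx)) hUM₂ hcf' hc₂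
          · rw [hvg] at key; exact key (hw' g hg)
          · intro x hx
            rcases mem_inter.1 hx with ⟨hxV, hxE⟩
            have hxV' : x ∈ V := mem_of_mem_erase hxV
            exact mem_erase.2 ⟨fun h => hfV (h ▸ hxV'), hVU₁ (mem_inter.2 ⟨hxV', hxE⟩)⟩
          · intro x hx
            rcases mem_inter.1 hx with ⟨hxV, hxE⟩
            exact hVU₂ (mem_inter.2 ⟨mem_of_mem_erase hxV, hxE⟩)

/-- Union of two Maker-Breaker games: if Maker wins one of `(E₁,𝓕₁)`, `(E₂,𝓕₂)`, she wins
the union `(E₁ ∪ E₂, 𝓕₁ ∪ 𝓕₂)`; and if `E₁ ∩ E₂ = ∅`, the converse also holds. -/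
theorem stmt2 {α : Type*} [DecidableEq α] (E₁ E₂ : Finset α)
    (F₁ F₂ : Set (Finset α))
    (h₁ : ∀ W ∈ F₁, W ⊆ E₁) (h₂ : ∀ W ∈ F₂, W ⊆ E₂) :
    ((MakerWins E₁ F₁ ∨ MakerWins E₂ F₂) → MakerWins (E₁ ∪ E₂) (F₁ ∪ F₂)) ∧
      (Disjoint E₁ E₂ →
        (MakerWins (E₁ ∪ E₂) (F₁ ∪ F₂) → MakerWins E₁ F₁ ∨ MakerWins E₂ F₂)) := by
  have hPmono : ∀ ⦃A B : Finset α⦄, A ⊆ B →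
      (∃ W ∈ F₁ ∪ F₂, W ⊆ A) → (∃ W ∈ F₁ ∪ F₂, W ⊆ B) := by
    rintro A B hAB ⟨W, hW, hWA⟩
    exact ⟨W, hW, hWA.trans hAB⟩
  constructor
  · rintro (h | h)
    · have h' := mwin_mono_pred (P := fun M => ∃ W ∈ F₁, W ⊆ M)
        (Q := fun M => ∃ W ∈ F₁ ∪ F₂, W ⊆ M)
        (by rintro M ⟨W, hW, hWM⟩; exact ⟨W, Set.mem_union_left _ hW, hWM⟩)
        E₁.card true E₁ ∅ h
      exact (maker_sim hPmono (E₁.card + (E₁ ∪ E₂).card) E₁ (E₁ ∪ E₂) ∅ ∅ le_rfl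
        (Finset.Subset.refl ∅)
        (fun x hx => mem_union_left _ (mem_union_left _ hx))
        (fun x _ => notMem_empty x) (fun x _ => notMem_empty x)).1 h'
    · have h' := mwin_mono_pred (P := fun M => ∃ W ∈ F₂, W ⊆ M)
        (Q := fun M => ∃ W ∈ F₁ ∪ F₂, W ⊆ M)
        (by rintro M ⟨W, hW, hWM⟩; exact ⟨W, Set.mem_union_right _ hW, hWM⟩)
        E₂.card true E₂ ∅ h
      exact (maker_sim hPmono (E₂.card + (E₁ ∪ E₂).card) E₂ (E₁ ∪ E₂) ∅ ∅ le_rfl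
        (Finset.Subset.refl ∅)
        (fun x hx => mem_union_left _ (mem_union_right _ hx))
        (fun x _ => notMem_empty x) (fun x _ => notMem_empty x)).1 h'
  · intro hdisj hU
    by_contra hcon
    push_neg at hcon
    have hQ1 : ∀ ⦃A B : Finset α⦄, A ⊆ B → (∃ W ∈ F₁, W ⊆ A) → (∃ W ∈ F₁, W ⊆ B) := by
      rintro A B hAB ⟨W, hW, hWA⟩
      exact ⟨W, hW, hWA.trans hAB⟩
    have hQ2 : ∀ ⦃A B : Finset α⦄, A ⊆ B → (∃ W ∈ F₂, W ⊆ A) → (∃ W ∈ F₂, W ⊆ B) := by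
      rintro A B hAB ⟨W, hW, hWA⟩
      exact ⟨W, hW, hWA.trans hAB⟩
    have hPQ : ∀ N : Finset α, (∃ W ∈ F₁ ∪ F₂, W ⊆ N) →
        (∃ W ∈ F₁, W ⊆ N ∩ E₁) ∨ (∃ W ∈ F₂, W ⊆ N ∩ E₂) := by
      rintro N ⟨W, (hW | hW), hWN⟩
      · exact Or.inl ⟨W, hW, subset_inter hWN (h₁ W hW)⟩
      · exact Or.inr ⟨W, hW, subset_inter hWN (h₂ W hW)⟩
    exact breaker_sim (2 * (E₁ ∪ E₂).card + E₁.card + E₂.card)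
      (fun M => ∃ W ∈ F₁, W ⊆ M) (fun M => ∃ W ∈ F₂, W ⊆ M)
      (fun M => ∃ W ∈ F₁ ∪ F₂, W ⊆ M) E₁ E₂ E₁ E₂ ∅ ∅ (E₁ ∪ E₂) ∅ true
      hQ1 hQ2 hPQ hdisj le_rfl (Finset.Subset.refl E₁) (Finset.Subset.refl E₂)
      (Finset.Subset.refl _) inter_subset_right inter_subset_right
      (by simp) (by simp) (fun x _ => notMem_empty x) (fun x _ => notMem_empty x)
      hcon.1 hcon.2 hU
end

section
/- Let ℓ ≥ 1 and let T be a tree with maximum degree at most 2ℓ−2 such that at most one vertex of T has degree exactly 2ℓ−2. Then Breaker has a winning strategy in the K_{1,ℓ}-game on T. -/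
open Finset

variable {α : Type*} [DecidableEq α]

set_option linter.unusedSectionVars false
set_option maxHeartbeats 1000000

lemma BWin_mono {Q Q' : Finset α → Prop} (h : ∀ B, Q B → Q' B) :
    ∀ n (b : Bool) U B, BWin Q n b U B → BWin Q' n b U B := by
  intro n
  induction n with
  | zero => intro b U B hw; exact h B hw
  | succ n ih =>
    intro b U B hw
    cases b with
    | true =>
      simp only [BWin] at hw ⊢
      intro e he; exact ih false _ _ (hw e he)
    | false =>
      simp only [BWin] at hw ⊢
      obtain ⟨e, he, hw⟩ := hw; exact ⟨e, he, ih true _ _ hw⟩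

lemma pairing_BWin (p : α → α) (D : Finset α)
    (hD : ∀ x ∈ D, p x ∈ D ∧ p x ≠ x ∧ p (p x) = x) :
    ∀ n U B, U.card = n → Disjoint U B →
      (∀ x ∈ D, (x ∈ B ∨ p x ∈ B) ∨ (x ∈ U ∧ p x ∈ U)) →
      BWin (fun B => ∀ x ∈ D, x ∈ B ∨ p x ∈ B) n true U B := by
  intro n
  induction n using Nat.strong_induction_on with
  | _ n ih =>
  rcases n with _ | n
  · intro U B hcard _ hinv
    simp only [BWin]
    intro x hx
    rcases hinv x hx with h | ⟨hxU, _⟩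
    · exact h
    · rw [Finset.card_eq_zero.mp hcard] at hxU; exact absurd hxU (notMem_empty x)
  rcases n with _ | n
  · intro U B hcard _ hinv
    simp only [BWin]
    intro e _ x hx
    rcases hinv x hx with h | ⟨hxU, hpxU⟩
    · exact h
    · obtain ⟨y, hy⟩ := Finset.card_eq_one.mp hcard
      rw [hy, mem_singleton] at hxU hpxU
      exact absurd (hpxU.trans hxU.symm) (hD x hx).2.1
  · intro U B hcard hdis hinv
    simp only [BWin]
    intro e he
    by_cases hcase : e ∈ D ∧ p e ∈ U.erase e
    · refine ⟨p e, hcase.2, ?_⟩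
      apply ih n (by omega)
      · rw [card_erase_of_mem hcase.2, card_erase_of_mem he, hcard]; omega
      · rw [disjoint_left]
        intro y hy hyB
        have hy1 := mem_of_mem_erase (mem_of_mem_erase hy)
        rcases mem_insert.mp hyB with h | h
        · exact (mem_erase.mp hy).1 h
        · exact (disjoint_left.mp hdis hy1) h
      · intro x hx
        obtain ⟨hpeD, hpene, hppe⟩ := hD e hcase.1
        obtain ⟨hpxD, hpxne, hppx⟩ := hD x hx
        rcases hinv x hx with h | ⟨hxU, hpxU⟩
        · rcases h with h | h
          · exact Or.inl (Or.inl (mem_insert_of_mem h))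
          · exact Or.inl (Or.inr (mem_insert_of_mem h))
        · by_cases hx1 : x = e
          · subst hx1; exact Or.inl (Or.inr (mem_insert_self _ _))
          by_cases hx2 : p x = e
          · have : x = p e := by rw [← hx2, hppx]
            rw [this]; exact Or.inl (Or.inl (mem_insert_self _ _))
          by_cases hx3 : x = p e
          · rw [hx3]; exact Or.inl (Or.inl (mem_insert_self _ _))
          by_cases hx4 : p x = p e
          · exfalso; apply hx1; rw [← hppx, hx4, hppe]
          · refine Or.inr ⟨?_, ?_⟩
            · exact mem_erase.mpr ⟨hx3, mem_erase.mpr ⟨hx1, hxU⟩⟩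
            · exact mem_erase.mpr ⟨hx4, mem_erase.mpr ⟨hx2, hpxU⟩⟩
    · have hne : (U.erase e).Nonempty := by
        rw [← Finset.card_pos, card_erase_of_mem he, hcard]; omega
      obtain ⟨e', he'⟩ := hne
      refine ⟨e', he', ?_⟩
      apply ih n (by omega)
      · rw [card_erase_of_mem he', card_erase_of_mem he, hcard]; omega
      · rw [disjoint_left]
        intro y hy hyB
        have hy1 := mem_of_mem_erase (mem_of_mem_erase hy)
        rcases mem_insert.mp hyB with h | h
        · exact (mem_erase.mp hy).1 h
        · exact (disjoint_left.mp hdis hy1) h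
      · intro x hx
        obtain ⟨hpxD, hpxne, hppx⟩ := hD x hx
        rcases hinv x hx with h | ⟨hxU, hpxU⟩
        · rcases h with h | h
          · exact Or.inl (Or.inl (mem_insert_of_mem h))
          · exact Or.inl (Or.inr (mem_insert_of_mem h))
        · by_cases hx1 : x = e
          · exfalso; apply hcase
            subst hx1
            exact ⟨hx, mem_erase.mpr ⟨hpxne, hpxU⟩⟩
          by_cases hx2 : p x = e
          · exfalso; apply hcase
            have hpe : p e = x := by rw [← hx2, hppx]
            have hxe : x ≠ e := fun h => hpxne (hx2.trans h.symm)
            refine ⟨hx2 ▸ hpxD, mem_erase.mpr ⟨?_, ?_⟩⟩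
            · rw [hpe]; exact hxe
            · rw [hpe]; exact hxU
          by_cases hx3 : x = e'
          · exact Or.inl (Or.inl (hx3 ▸ mem_insert_self _ _))
          by_cases hx4 : p x = e'
          · exact Or.inl (Or.inr (hx4 ▸ mem_insert_self _ _))
          · refine Or.inr ⟨?_, ?_⟩
            · exact mem_erase.mpr ⟨hx3, mem_erase.mpr ⟨hx1, hxU⟩⟩
            · exact mem_erase.mpr ⟨hx4, mem_erase.mpr ⟨hx2, hpxU⟩⟩


lemma exists_pairing (s : Finset α) :
    ∃ (f : α → α) (d : Finset α), d ⊆ s ∧ d.card = 2 * (s.card / 2) ∧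
      ∀ x ∈ d, f x ∈ d ∧ f x ≠ x ∧ f (f x) = x := by
  generalize hn : s.card = n
  induction n using Nat.strong_induction_on generalizing s with
  | _ n ih =>
  rcases Nat.lt_or_ge n 2 with h2 | h2
  · exact ⟨id, ∅, empty_subset _, by simp; omega, by simp⟩
  · have h0 : 0 < s.card := by omega
    obtain ⟨a, ha⟩ := Finset.card_pos.mp h0
    have h1 : 0 < (s.erase a).card := by rw [card_erase_of_mem ha]; omega
    obtain ⟨b, hb⟩ := Finset.card_pos.mp h1
    have hab : b ≠ a := (mem_erase.mp hb).1
    have hbs : b ∈ s := mem_of_mem_erase hb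
    have hcard' : ((s.erase a).erase b).card = n - 2 := by
      rw [card_erase_of_mem hb, card_erase_of_mem ha, hn]; omega
    obtain ⟨f, d, hds, hdc, hf⟩ := ih (n - 2) (by omega) ((s.erase a).erase b) hcard'
    have had : a ∉ d := fun h => (mem_erase.mp (mem_of_mem_erase (hds h))).1 rfl
    have hbd : b ∉ d := fun h => (mem_erase.mp (hds h)).1 rfl
    set g : α → α := fun x => if x = a then b else if x = b then a else f x with hg
    have hga : g a = b := by simp [hg]
    have hgb : g b = a := by simp [hg, hab]
    have hgx : ∀ x, x ≠ a → x ≠ b → g x = f x := by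
      intro x h1 h2; simp [hg, h1, h2]
    refine ⟨g, insert a (insert b d), ?_, ?_, ?_⟩
    · intro x hx
      rcases mem_insert.mp hx with h | h
      · exact h ▸ ha
      rcases mem_insert.mp h with h | h
      · exact h ▸ hbs
      · exact mem_of_mem_erase (mem_of_mem_erase (hds h))
    · rw [card_insert_of_notMem (by simp [hab.symm, had]),
        card_insert_of_notMem hbd, hdc]
      omega
    · intro x hx
      rcases mem_insert.mp hx with h | h
      · subst h
        rw [hga, hgb]
        exact ⟨mem_insert_of_mem (mem_insert_self _ _), hab, rfl⟩
      rcases mem_insert.mp h with h | h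
      · subst h
        rw [hgb, hga]
        exact ⟨mem_insert_self _ _, fun hh => hab hh.symm, rfl⟩
      · have hxa : x ≠ a := fun hh => had (hh ▸ h)
        have hxb : x ≠ b := fun hh => hbd (hh ▸ h)
        obtain ⟨hf1, hf2, hf3⟩ := hf x h
        have hfa : f x ≠ a := fun hh => had (hh ▸ hf1)
        have hfb : f x ≠ b := fun hh => hbd (hh ▸ hf1)
        rw [hgx x hxa hxb, hgx (f x) hfa hfb]
        exact ⟨mem_insert_of_mem (mem_insert_of_mem hf1), hf2, hf3⟩


section TreeAux
open SimpleGraph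

variable {V : Type*} [DecidableEq V] {T : SimpleGraph V}

noncomputable def pth (hT : T.IsTree) (r v : V) : T.Walk v r :=
  (hT.existsUnique_path v r).exists.choose

lemma pth_isPath (hT : T.IsTree) (r v : V) : (pth hT r v).IsPath :=
  (hT.existsUnique_path v r).exists.choose_spec

lemma pth_unique (hT : T.IsTree) {r v : V} (q : T.Walk v r) (hq : q.IsPath) :
    q = pth hT r v :=
  (hT.existsUnique_path v r).unique hq (pth_isPath hT r v)

noncomputable def par (hT : T.IsTree) (r v : V) : V := (pth hT r v).getVert 1

lemma par_self (hT : T.IsTree) (r : V) : par hT r r = r := by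
  have : pth hT r r = Walk.nil := (pth_unique hT Walk.nil Walk.IsPath.nil).symm
  rw [par, this]
  simp [Walk.getVert]

lemma pth_not_nil (hT : T.IsTree) {r v : V} (hvr : v ≠ r) : ¬ (pth hT r v).Nil :=
  Walk.not_nil_of_ne hvr

lemma adj_par (hT : T.IsTree) {r v : V} (hvr : v ≠ r) : T.Adj v (par hT r v) :=
  Walk.adj_snd (pth_not_nil hT hvr)

lemma par_or (hT : T.IsTree) (r : V) {a b : V} (hab : T.Adj a b) :
    par hT r a = b ∨ par hT r b = a := by
  by_cases hb : a ∈ (pth hT r b).support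
  · right
    have hbna : b ∉ (pth hT r a).support := by
      intro hbs
      have hdrop : ((pth hT r a).dropUntil b hbs) = pth hT r b :=
        pth_unique hT _ ((pth_isPath hT r a).dropUntil hbs)
      have ha2 : a ∈ ((pth hT r a).dropUntil b hbs).support := by rw [hdrop]; exact hb
      have hnd := (pth_isPath hT r a).support_nodup
      rw [← Walk.take_spec (pth hT r a) hbs, Walk.support_append] at hnd
      have ha1 : a ∈ ((pth hT r a).takeUntil b hbs).support := Walk.start_mem_support _
      have ha3 : a ∈ ((pth hT r a).dropUntil b hbs).support.tail := by
        rw [Walk.support_eq_cons ((pth hT r a).dropUntil b hbs)] at ha2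
        rcases List.mem_cons.mp ha2 with h | h
        · exact absurd h hab.ne
        · exact h
      exact List.disjoint_of_nodup_append hnd ha1 ha3
    have hp : (Walk.cons hab.symm (pth hT r a)).IsPath := (pth_isPath hT r a).cons hbna
    have he := pth_unique hT _ hp
    rw [par, ← he]
    simp [Walk.getVert_cons_succ, Walk.getVert_zero]
  · left
    have hp : (Walk.cons hab (pth hT r b)).IsPath := (pth_isPath hT r b).cons hb
    have he := pth_unique hT _ hp
    rw [par, ← he]
    simp [Walk.getVert_cons_succ, Walk.getVert_zero]

variable [Fintype V] [DecidableRel T.Adj]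

noncomputable def childEdges (hT : T.IsTree) (r v : V) : Finset (Sym2 V) :=
  T.incidenceFinset v \ {s(v, par hT r v)}

lemma childEdges_subset (hT : T.IsTree) (r v : V) :
    childEdges hT r v ⊆ T.incidenceFinset v := sdiff_subset

lemma childEdges_disjoint (hT : T.IsTree) (r : V) {u v : V} (huv : u ≠ v) :
    Disjoint (childEdges hT r u) (childEdges hT r v) := by
  rw [Finset.disjoint_left]
  intro e heu hev
  rw [childEdges, mem_sdiff, mem_incidenceFinset] at heu hev
  obtain ⟨⟨heE, heu'⟩, hnu⟩ := heu
  obtain ⟨⟨_, hev'⟩, hnv⟩ := hev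
  have he : e = s(u, v) := (Sym2.mem_and_mem_iff huv).mp ⟨heu', hev'⟩
  have hadj : T.Adj u v := by rwa [he, SimpleGraph.mem_edgeSet] at heE
  rcases par_or hT r hadj with h | h
  · exact hnu (by rw [he, ← h]; exact mem_singleton_self _)
  · exact hnv (by rw [he, ← h, Sym2.eq_swap]; exact mem_singleton_self _)

lemma childEdges_root (hT : T.IsTree) (r : V) :
    childEdges hT r r = T.incidenceFinset r := by
  rw [childEdges, par_self, Finset.sdiff_eq_self_iff_disjoint, Finset.disjoint_right]
  intro e he
  rw [mem_singleton] at he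
  subst he
  rw [mem_incidenceFinset]
  intro h
  exact T.irrefl ((SimpleGraph.mem_edgeSet T).mp h.1)

lemma childEdges_card (hT : T.IsTree) {r v : V} (hvr : v ≠ r) :
    (childEdges hT r v).card = T.degree v - 1 := by
  rw [childEdges, card_sdiff_of_subset, card_incidenceFinset_eq_degree, card_singleton]
  rw [singleton_subset_iff, mem_incidenceFinset]
  exact ⟨(adj_par hT hvr), Sym2.mem_mk_left _ _⟩


end TreeAux

open SimpleGraph

/-- Winning sets of the `K_{1,ℓ}`-game on `G`: sets of `ℓ` edges of `G` incident to a
common vertex. -/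
def starSets {V : Type*} (G : SimpleGraph V) (ℓ : ℕ) : Set (Finset (Sym2 V)) :=
  {W | (∀ e ∈ W, e ∈ G.edgeSet) ∧ W.card = ℓ ∧ ∃ v : V, ∀ e ∈ W, v ∈ e}

/-- If `T` is a tree with maximum degree at most `2ℓ - 2` in which at most one vertex has
degree exactly `2ℓ - 2`, then Breaker wins the `K_{1,ℓ}`-game on `T`. -/
theorem stmt5 {V : Type*} [Fintype V] [DecidableEq V]
    (T : SimpleGraph V) [DecidableRel T.Adj] (hT : T.IsTree) (ℓ : ℕ) (hℓ : 1 ≤ ℓ)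
    (hmax : ∀ v : V, T.degree v ≤ 2 * ℓ - 2)
    (huniq : ∀ u v : V, T.degree u = 2 * ℓ - 2 → T.degree v = 2 * ℓ - 2 → u = v) :
    BreakerWins T.edgeFinset (starSets T ℓ) := by
  classical
  haveI hne : Nonempty V := hT.isConnected.nonempty
  obtain ⟨r, -, hr⟩ := Finset.exists_max_image (Finset.univ : Finset V) (fun v => T.degree v)
    Finset.univ_nonempty
  choose f d hsub hcard hpair using fun v => exists_pairing (childEdges hT r v)
  set D : Finset (Sym2 V) := Finset.univ.biUnion d with hD
  have howner : ∀ v w e, e ∈ d v → e ∈ d w → v = w := by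
    intro v w e hv hw
    by_contra hvw
    exact (Finset.disjoint_left.mp (childEdges_disjoint hT r hvw)
      (hsub v hv)) (hsub w hw)
  set p : Sym2 V → Sym2 V := fun e => if h : ∃ v, e ∈ d v then f h.choose e else e with hp
  have hpeq : ∀ v e, e ∈ d v → p e = f v e := by
    intro v e hv
    have h : ∃ w, e ∈ d w := ⟨v, hv⟩
    rw [hp]
    simp only [dif_pos h]
    rw [howner h.choose v e h.choose_spec hv]
  have hDmem : ∀ x, x ∈ D ↔ ∃ v, x ∈ d v := by
    intro x
    rw [hD, mem_biUnion]
    constructor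
    · rintro ⟨v, -, hv⟩; exact ⟨v, hv⟩
    · rintro ⟨v, hv⟩; exact ⟨v, mem_univ v, hv⟩
  have hDspec : ∀ x ∈ D, p x ∈ D ∧ p x ≠ x ∧ p (p x) = x := by
    intro x hx
    obtain ⟨v, hv⟩ := (hDmem x).mp hx
    obtain ⟨h1, h2, h3⟩ := hpair v x hv
    refine ⟨(hDmem _).mpr ⟨v, ?_⟩, ?_, ?_⟩
    · rw [hpeq v x hv]; exact h1
    · rw [hpeq v x hv]; exact h2
    · rw [hpeq v x hv, hpeq v _ h1]; exact h3
  have hDX : D ⊆ T.edgeFinset := by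
    intro x hx
    obtain ⟨v, hv⟩ := (hDmem x).mp hx
    have h2 := childEdges_subset hT r v (hsub v hv)
    rw [mem_incidenceFinset] at h2
    rw [mem_edgeFinset]
    exact h2.1
  have hstar : ∀ W ∈ starSets T ℓ, ∃ x ∈ D, x ∈ W ∧ p x ∈ W := by
    rintro W ⟨hWedge, hWcard, u, huW⟩
    have hWinc : W ⊆ T.incidenceFinset u := by
      intro e he
      rw [mem_incidenceFinset]
      exact ⟨hWedge e he, huW e he⟩
    by_contra hcon
    push_neg at hcon
    set A := W ∩ d u with hA
    have hAd : A ⊆ d u := inter_subset_right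
    have hdisj : Disjoint A (A.image (f u)) := by
      rw [Finset.disjoint_left]
      intro x hxA hxI
      obtain ⟨y, hyA, hyx⟩ := Finset.mem_image.mp hxI
      have hyd : y ∈ d u := hAd hyA
      have hyD : y ∈ D := (hDmem y).mpr ⟨u, hyd⟩
      have hpyW : p y ∈ W := by
        rw [hpeq u y hyd, hyx]
        exact (mem_inter.mp hxA).1
      exact hcon y hyD (mem_inter.mp hyA).1 hpyW
    have hinj : Set.InjOn (f u) A := by
      intro x hx y hy hxy
      have h3x := (hpair u x (hAd hx)).2.2
      have h3y := (hpair u y (hAd hy)).2.2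
      rw [← h3x, hxy, h3y]
    have himg : A.image (f u) ⊆ d u := by
      intro x hx
      obtain ⟨y, hy, hyx⟩ := Finset.mem_image.mp hx
      exact hyx ▸ (hpair u y (hAd hy)).1
    have h2a : A.card + A.card ≤ (d u).card := by
      calc A.card + A.card = A.card + (A.image (f u)).card := by
            rw [Finset.card_image_of_injOn hinj]
        _ = (A ∪ A.image (f u)).card := (card_union_of_disjoint hdisj).symm
        _ ≤ (d u).card := card_le_card (union_subset hAd himg)
    have hsplitW : A.card + (W \ d u).card = W.card :=
      Finset.card_inter_add_card_sdiff W (d u)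
    have hm := hcard u
    by_cases hur : u = r
    · subst hur
      have hWd' : W \ d u ⊆ childEdges hT u u \ d u := by
        intro e he
        rw [mem_sdiff] at he ⊢
        refine ⟨?_, he.2⟩
        rw [childEdges_root]
        exact hWinc he.1
      have hwd' : (W \ d u).card ≤ (childEdges hT u u).card - (d u).card := by
        calc (W \ d u).card ≤ (childEdges hT u u \ d u).card := card_le_card hWd'
          _ = (childEdges hT u u).card - (d u).card := card_sdiff_of_subset (hsub u)
      have hcr : (childEdges hT u u).card = T.degree u := by
        rw [childEdges_root, card_incidenceFinset_eq_degree]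
      have hdeg := hmax u
      omega
    · have hWd : W \ d u ⊆ (childEdges hT r u \ d u) ∪ {s(u, par hT r u)} := by
        intro e he
        rw [mem_sdiff] at he
        by_cases hc : e ∈ childEdges hT r u
        · exact mem_union_left _ (mem_sdiff.mpr ⟨hc, he.2⟩)
        · have hei : e ∈ T.incidenceFinset u := hWinc he.1
          rw [childEdges, mem_sdiff] at hc
          push_neg at hc
          exact mem_union_right _ (hc hei)
      have hwd : (W \ d u).card ≤ (childEdges hT r u).card - (d u).card + 1 := by
        calc (W \ d u).card
            ≤ ((childEdges hT r u \ d u) ∪ {s(u, par hT r u)}).card := card_le_card hWd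
          _ ≤ (childEdges hT r u \ d u).card + 1 := by
              refine (card_union_le _ _).trans ?_
              rw [card_singleton]
          _ = (childEdges hT r u).card - (d u).card + 1 := by rw [card_sdiff_of_subset (hsub u)]
      have hcu : (childEdges hT r u).card = T.degree u - 1 := childEdges_card hT hur
      have hdeg := hmax u
      have hd1 : 1 ≤ T.degree u := by
        have : 0 < T.degree u :=
          (T.degree_pos_iff_exists_adj u).mpr ⟨_, adj_par hT hur⟩
        omega
      have hdne : T.degree u ≠ 2 * ℓ - 2 := by
        intro h
        apply hur
        have hrdeg : T.degree r = 2 * ℓ - 2 :=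
          le_antisymm (hmax r) (h ▸ hr u (mem_univ u))
        exact huniq u r h hrdeg
      omega
  refine BWin_mono ?_ _ _ _ _ (pairing_BWin p D hDspec T.edgeFinset.card T.edgeFinset ∅ rfl
    (by simp) (fun x hx => Or.inr ⟨hDX hx, hDX (hDspec x hx).1⟩))
  intro B hQ W hW
  obtain ⟨x, hxD, hxW, hpxW⟩ := hstar W hW
  rcases hQ x hxD with h | h
  · exact ⟨x, hxW, h⟩
  · exact ⟨p x, hpxW, h⟩
end

section
/- Let T be a tree and ℓ ≥ 1. Maker has a winning strategy in the K_{1,ℓ}-game on T if and only if there exists a (nonempty, connected) subtree T' of T such that every vertex x of T' satisfies deg_T(x) ≥ 2ℓ − 1 − deg_{T'}(x), where deg_{T'}(x) is the degree of x within T'. -/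
open Finset

variable {α : Type*} [DecidableEq α]

open SimpleGraph

open Finset SimpleGraph
set_option linter.unusedSectionVars false

namespace StarGameAux

variable {V : Type*} [DecidableEq V]

/-- number of elements of `F` incident to `x`. -/
def cnt (x : V) (F : Finset (Sym2 V)) : ℕ := (F.filter (fun e => x ∈ e)).card

lemma cnt_le_of_subset (x : V) {F F' : Finset (Sym2 V)} (h : F ⊆ F') : cnt x F ≤ cnt x F' :=
  Finset.card_le_card (Finset.filter_subset_filter _ h)

lemma cnt_erase_add_one (x : V) {e : Sym2 V} {F : Finset (Sym2 V)} (hx : x ∈ e) (he : e ∈ F) :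
    cnt x F = cnt x (F.erase e) + 1 := by
  unfold cnt
  rw [Finset.filter_erase, Finset.card_erase_of_mem (by simp [he, hx])]
  have : 0 < (F.filter (fun e => x ∈ e)).card := Finset.card_pos.2 ⟨e, by simp [he, hx]⟩
  omega

lemma cnt_erase_of_not_mem (x : V) {e : Sym2 V} {F : Finset (Sym2 V)} (hx : x ∉ e) :
    cnt x (F.erase e) = cnt x F := by
  unfold cnt
  rw [Finset.filter_erase, Finset.erase_eq_of_notMem (by simp [hx])]

lemma cnt_erase_ge (x : V) (e : Sym2 V) (F : Finset (Sym2 V)) :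
    cnt x F ≤ cnt x (F.erase e) + 1 := by
  by_cases hx : x ∈ e
  · by_cases he : e ∈ F
    · exact (cnt_erase_add_one x hx he).le
    · rw [Finset.erase_eq_of_notMem he]; omega
  · rw [cnt_erase_of_not_mem x hx]; omega

lemma cnt_insert_of_mem (x : V) {e : Sym2 V} {F : Finset (Sym2 V)} (hx : x ∈ e) (he : e ∉ F) :
    cnt x (insert e F) = cnt x F + 1 := by
  unfold cnt
  rw [Finset.filter_insert, if_pos hx, Finset.card_insert_of_notMem (by simp [he])]

lemma cnt_insert_of_not_mem (x : V) {e : Sym2 V} {F : Finset (Sym2 V)} (hx : x ∉ e) :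
    cnt x (insert e F) = cnt x F := by
  unfold cnt
  rw [Finset.filter_insert, if_neg hx]

lemma exists_mem_of_cnt_pos {x : V} {F : Finset (Sym2 V)} (h : 0 < cnt x F) :
    ∃ e ∈ F, x ∈ e := by
  obtain ⟨e, he⟩ := Finset.card_pos.1 h
  simp only [Finset.mem_filter] at he
  exact ⟨e, he.1, he.2⟩

variable [Fintype V] (T : SimpleGraph V) [DecidableRel T.Adj]

lemma edge_decomp {e : Sym2 V} (he : e ∈ T.edgeFinset) {x : V} (hx : x ∈ e) :
    ∃ y, T.Adj x y ∧ e = s(x, y) := by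
  induction e with
  | _ a b =>
    rw [Sym2.mem_iff] at hx
    rw [SimpleGraph.mem_edgeFinset, SimpleGraph.mem_edgeSet] at he
    rcases hx with rfl | rfl
    · exact ⟨b, he, rfl⟩
    · exact ⟨a, he.symm, Sym2.eq_swap⟩

/-- incidence-to-neighbor bijection for counts. -/
lemma cnt_filter_eq (x : V) (Q : Sym2 V → Prop) [DecidablePred Q] :
    (T.edgeFinset.filter (fun e => x ∈ e ∧ Q e)).card
      = ((T.neighborFinset x).filter (fun y => Q s(x, y))).card := by
  symm
  apply Finset.card_bij (fun y _ => s(x, y))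
  · intro y hy
    simp only [Finset.mem_filter, SimpleGraph.mem_neighborFinset] at hy
    simp only [Finset.mem_filter, SimpleGraph.mem_edgeFinset, SimpleGraph.mem_edgeSet]
    exact ⟨hy.1, Sym2.mem_mk_left _ _, hy.2⟩
  · intro y hy y' hy' h
    exact (Sym2.congr_right).1 h
  · intro e he
    simp only [Finset.mem_filter] at he
    obtain ⟨y, hadj, rfl⟩ := edge_decomp T he.1 he.2.1
    refine ⟨y, ?_, rfl⟩
    simp only [Finset.mem_filter, SimpleGraph.mem_neighborFinset]
    exact ⟨hadj, he.2.2⟩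

lemma cnt_edgeFinset (x : V) : cnt x T.edgeFinset = T.degree x := by
  unfold cnt
  rw [Finset.filter_congr (q := fun e => x ∈ e ∧ (fun _ => True) e) (fun e _ => by simp),
    cnt_filter_eq T x (fun _ => True), Finset.filter_true_of_mem (by intro _ _; trivial)]
  rfl

lemma cnt_split (x : V) (F : Finset (Sym2 V)) (q : Sym2 V → Prop) [DecidablePred q] :
    (F.filter (fun e => x ∈ e ∧ q e)).card + (F.filter (fun e => x ∈ e ∧ ¬ q e)).card
      = cnt x F := by
  classical
  unfold cnt
  rw [← Finset.filter_filter, ← Finset.filter_filter]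
  exact Finset.card_filter_add_card_filter_not (s := F.filter (fun e => x ∈ e)) q

end StarGameAux


namespace StarGameAux

variable {V : Type*} [DecidableEq V] [Fintype V] (T : SimpleGraph V) [DecidableRel T.Adj] (ℓ : ℕ)

/-- Maker's goal predicate. -/
def P (M : Finset (Sym2 V)) : Prop := ∃ W ∈ starSets T ℓ, W ⊆ M

lemma P_done {x : V} {M : Finset (Sym2 V)} (hM : M ⊆ T.edgeFinset) (h : ℓ ≤ cnt x M) :
    P T ℓ M := by
  obtain ⟨W, hWsub, hWcard⟩ := Finset.exists_subset_card_eq (n := ℓ) h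
  refine ⟨W, ⟨?_, hWcard, x, ?_⟩, ?_⟩
  · intro e he
    have := hM (Finset.filter_subset _ _ (hWsub he))
    rwa [SimpleGraph.mem_edgeFinset] at this
  · intro e he
    exact (Finset.mem_filter.1 (hWsub he)).2
  · exact hWsub.trans (Finset.filter_subset _ _)

lemma P_mono {M M' : Finset (Sym2 V)} (h : M ⊆ M') (hP : P T ℓ M) : P T ℓ M' := by
  obtain ⟨W, hW, hWM⟩ := hP; exact ⟨W, hW, hWM.trans h⟩

lemma mwin_done (n : ℕ) (b : Bool) (U M : Finset (Sym2 V)) (hn : n = U.card) (hP : P T ℓ M) :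
    MWin (P T ℓ) n b U M := by
  induction n generalizing b U M with
  | zero => exact hP
  | succ n ih =>
    cases b with
    | false =>
      intro e he
      exact ih true _ _ (by rw [Finset.card_erase_of_mem he]; omega) hP
    | true =>
      obtain ⟨e, he⟩ := Finset.card_pos.1 (show 0 < U.card by omega)
      exact ⟨e, he, ih false _ _ (by rw [Finset.card_erase_of_mem he]; omega)
        (P_mono T ℓ (Finset.subset_insert _ _) hP)⟩

/-- The singleton endgame: if `2·(Maker's edges at x) + (free edges at x)` is at least
`2ℓ-1` at Maker's turn (`2ℓ` at Breaker's turn), Maker wins. -/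
lemma star_endgame (x : V) (n : ℕ) (b : Bool) (U M : Finset (Sym2 V))
    (hn : n = U.card) (hd : Disjoint U M) (hUX : U ⊆ T.edgeFinset) (hMX : M ⊆ T.edgeFinset)
    (hvT : b = true → 2*ℓ ≤ 2 * cnt x M + cnt x U + 1)
    (hvF : b = false → 2*ℓ ≤ 2 * cnt x M + cnt x U ∨ ℓ ≤ cnt x M) :
    MWin (P T ℓ) n b U M := by
  induction n generalizing b U M with
  | zero =>
    have hU : U = ∅ := by rw [← Finset.card_eq_zero]; omega
    subst hU
    have hu : cnt x (∅ : Finset (Sym2 V)) = 0 := by simp [cnt]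
    have hl : ℓ ≤ cnt x M := by
      cases b
      · rcases hvF rfl with h | h; omega; exact h
      · have := hvT rfl; omega
    exact P_done T ℓ hMX hl
  | succ n ih =>
    cases b with
    | true =>
      by_cases hdone : ℓ ≤ cnt x M
      · exact mwin_done T ℓ _ _ _ _ hn (P_done T ℓ hMX hdone)
      · have hv := hvT rfl
        have hu : 0 < cnt x U := by omega
        obtain ⟨e, heU, hex⟩ := exists_mem_of_cnt_pos hu
        have heM : e ∉ M := Finset.disjoint_left.1 hd heU
        refine ⟨e, heU, ih false _ _ ?_ ?_ ?_ ?_ (by simp) ?_⟩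
        · rw [Finset.card_erase_of_mem heU]; omega
        · exact Finset.disjoint_insert_right.2
            ⟨Finset.notMem_erase _ _, hd.mono_left (Finset.erase_subset _ _)⟩
        · exact (Finset.erase_subset _ _).trans hUX
        · exact Finset.insert_subset (hUX heU) hMX
        · intro _
          left
          rw [cnt_insert_of_mem x hex heM]
          have := cnt_erase_add_one x hex heU
          omega
    | false =>
      intro e he
      apply ih true _ _ (by rw [Finset.card_erase_of_mem he]; omega)
        (hd.mono_left (Finset.erase_subset _ _)) ((Finset.erase_subset _ _).trans hUX) hMX ?_ (by simp)
      intro _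
      have h2 := cnt_erase_ge x e U
      rcases hvF rfl with h | h <;> omega

end StarGameAux
namespace StarGameAux

variable {V : Type*} [DecidableEq V] [Fintype V] (T : SimpleGraph V) [DecidableRel T.Adj] (ℓ : ℕ)

/-- neighbor count of `x` in the list `l`. -/
def eCnt (l : List V) (x : V) : ℕ := l.countP (fun y => decide (T.Adj x y))

/-- a leaf-elimination order: each entry has exactly one neighbor among later entries. -/
def GoodList : List V → Prop
  | [] => False
  | [_] => True
  | z :: rest => rest.countP (fun y => decide (T.Adj z y)) = 1 ∧ GoodList rest

lemma eCnt_cons (z : V) (l : List V) (x : V) :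
    eCnt T (z :: l) x = eCnt T l x + if T.Adj x z then 1 else 0 := by
  simp only [eCnt, List.countP_cons, decide_eq_true_eq]

lemma eCnt_self_cons (z : V) (l : List V) :
    eCnt T (z :: l) z = eCnt T l z := by
  rw [eCnt_cons, if_neg (T.irrefl)]
  omega

lemma countP_one_exists {z : V} {l : List V}
    (h : l.countP (fun y => decide (T.Adj z y)) = 1) :
    ∃ w ∈ l, T.Adj z w ∧ ∀ y ∈ l, T.Adj z y → y = w := by
  rw [List.countP_eq_length_filter] at h
  obtain ⟨w, hw⟩ := List.length_eq_one_iff.1 h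
  have hwmem : w ∈ l.filter (fun y => decide (T.Adj z y)) := by rw [hw]; exact List.mem_singleton_self w
  rw [List.mem_filter, decide_eq_true_eq] at hwmem
  refine ⟨w, hwmem.1, hwmem.2, ?_⟩
  intro y hy hadj
  have : y ∈ l.filter (fun y => decide (T.Adj z y)) := by
    rw [List.mem_filter, decide_eq_true_eq]; exact ⟨hy, hadj⟩
  rw [hw, List.mem_singleton] at this
  exact this

/-- Main Maker-side lemma. -/
lemma tree_win : ∀ (l : List V), GoodList T l → l.Nodup →
    ∀ (n : ℕ) (U M : Finset (Sym2 V)), n = U.card → Disjoint U M →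
    U ⊆ T.edgeFinset → M ⊆ T.edgeFinset →
    (∀ x ∈ l, ∀ y ∈ l, T.Adj x y → s(x, y) ∈ U) →
    (∀ x ∈ l, 2*ℓ ≤ 2 * cnt x M + cnt x U + eCnt T l x + 1) →
    MWin (P T ℓ) n true U M
  | [], hg, _, _, _, _, _, _, _, _, _, _ => hg.elim
  | [z], _, _, n, U, M, hn, hd, hUX, hMX, _, hv => by
    apply star_endgame T ℓ z n true U M hn hd hUX hMX _ (by simp)
    intro _
    have := hv z (List.mem_singleton_self z)
    rw [eCnt_self_cons] at this
    simp only [eCnt, List.countP_nil] at this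
    omega
  | z :: y₀ :: rest, hg, hnd, n, U, M, hn, hd, hUX, hMX, hint, hv => by
    set tail := y₀ :: rest with htail
    obtain ⟨hone, hgt⟩ := hg
    obtain ⟨w, hwt, hzw, huniq⟩ := countP_one_exists T hone
    have hznt : z ∉ tail := (List.nodup_cons.1 hnd).1
    have hndt : tail.Nodup := (List.nodup_cons.1 hnd).2
    have hzl : z ∈ z :: tail := List.mem_cons_self
    have hwl : w ∈ z :: tail := List.mem_cons_of_mem z hwt
    have he₀U : s(z, w) ∈ U := hint z hzl w hwl hzw
    have he₀M : s(z, w) ∉ M := Finset.disjoint_left.1 hd he₀U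
    have hzz : z ∈ s(z, w) := Sym2.mem_mk_left z w
    have hwz : w ∈ s(z, w) := Sym2.mem_mk_right z w
    have hvz := hv z hzl
    have heCz : eCnt T (z :: tail) z = 1 := by
      rw [eCnt_self_cons]; exact hone
    rw [heCz] at hvz
    -- Maker claims s(z,w)
    obtain ⟨m, rfl⟩ : ∃ m, n = m + 1 := by
      rcases n with _ | m
      · exfalso; have := Finset.card_pos.2 ⟨_, he₀U⟩; omega
      · exact ⟨m, rfl⟩
    refine ⟨s(z, w), he₀U, ?_⟩
    have hU₁card : (U.erase s(z, w)).card = m := by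
      rw [Finset.card_erase_of_mem he₀U]; omega
    have hcntzM₁ : cnt z (insert s(z, w) M) = cnt z M + 1 := cnt_insert_of_mem z hzz he₀M
    have hcntzU : cnt z U = cnt z (U.erase s(z, w)) + 1 := cnt_erase_add_one z hzz he₀U
    have hM₁X : insert s(z, w) M ⊆ T.edgeFinset := Finset.insert_subset (hUX he₀U) hMX
    rcases m with _ | k
    · -- board exhausted after Maker's move
      show P T ℓ (insert s(z, w) M)
      have hU₁ : U.erase s(z, w) = ∅ := Finset.card_eq_zero.1 hU₁card
      have : cnt z (U.erase s(z, w)) = 0 := by rw [hU₁]; simp [cnt]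
      exact P_done T ℓ (x := z) hM₁X (by omega)
    · -- Breaker moves
      intro f hf
      have hfU : f ∈ U := Finset.mem_of_mem_erase hf
      have hfne₀ : f ≠ s(z, w) := Finset.ne_of_mem_erase hf
      have hU₂card : ((U.erase s(z, w)).erase f).card = k := by
        rw [Finset.card_erase_of_mem hf]; omega
      have hd₂ : Disjoint ((U.erase s(z, w)).erase f) (insert s(z, w) M) :=
        Finset.disjoint_insert_right.2 ⟨fun hc => (Finset.notMem_erase _ _)
          (Finset.mem_of_mem_erase hc), hd.mono_left
          (((Finset.erase_subset _ _)).trans (Finset.erase_subset _ _))⟩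
      have hU₂X : (U.erase s(z, w)).erase f ⊆ T.edgeFinset :=
        ((Finset.erase_subset _ _).trans (Finset.erase_subset _ _)).trans hUX
      by_cases hzf : z ∈ f
      · -- Breaker answered at z : continue with the tail
        obtain ⟨q, hzq, rfl⟩ := edge_decomp T (hUX hfU) hzf
        have hqt : q ∉ tail := by
          intro hqt
          exact hfne₀ (by rw [huniq q hqt hzq])
        apply tree_win tail hgt hndt k _ _ hU₂card.symm hd₂ hU₂X hM₁X
        · -- internal edges still free
          intro a ha b hb hab
          have habU : s(a, b) ∈ U := hint a (List.mem_cons_of_mem z ha) b (List.mem_cons_of_mem z hb) hab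
          have hz_nab : z ∉ s(a, b) := by
            rw [Sym2.mem_iff]
            rintro (rfl | rfl) <;> exact hznt (by assumption)
          refine Finset.mem_erase.2 ⟨?_, Finset.mem_erase.2 ⟨?_, habU⟩⟩
          · intro hc; rw [hc] at hz_nab; exact hz_nab (Sym2.mem_mk_left z q)
          · intro hc; rw [hc] at hz_nab; exact hz_nab hzz
        · -- the value invariant on the tail
          intro x hx
          have hxl : x ∈ z :: tail := List.mem_cons_of_mem z hx
          have hxz : x ≠ z := fun hc => hznt (hc ▸ hx)
          have hvx := hv x hxl
          by_cases hxw : x = w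
          · subst hxw
            have hcxM : cnt x (insert s(z, x) M) = cnt x M + 1 :=
              cnt_insert_of_mem x (Sym2.mem_mk_right z x) he₀M
            have hxf : x ∉ s(z, q) := by
              rw [Sym2.mem_iff]
              rintro (rfl | rfl)
              · exact hxz rfl
              · exact hqt hwt
            have hcxU2 : cnt x ((U.erase s(z, x)).erase (s(z, q))) = cnt x (U.erase s(z, x)) :=
              cnt_erase_of_not_mem x hxf
            have hcxU : cnt x U = cnt x (U.erase s(z, x)) + 1 :=
              cnt_erase_add_one x (Sym2.mem_mk_right z x) he₀U
            have heCx : eCnt T (z :: tail) x = eCnt T tail x + 1 := by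
              rw [eCnt_cons, if_pos hzw.symm]
            rw [Sym2.eq_swap] at hcxM hcxU2 hcxU ⊢
            rw [hcxM, hcxU2]
            omega
          · have hxe₀ : x ∉ s(z, w) := by
              rw [Sym2.mem_iff]; rintro (rfl | rfl); exact hxz rfl; exact hxw rfl
            have hxf : x ∉ s(z, q) := by
              rw [Sym2.mem_iff]
              rintro (rfl | rfl)
              · exact hxz rfl
              · exact hqt hx
            have heCx : eCnt T (z :: tail) x = eCnt T tail x := by
              rw [eCnt_cons, if_neg]
              · omega
              · intro hc; exact hxw (huniq x hx hc.symm)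
            rw [cnt_insert_of_not_mem x hxe₀, cnt_erase_of_not_mem x hxf,
              cnt_erase_of_not_mem x hxe₀]
            omega
      · -- Breaker played away from z : finish at the singleton z
        apply star_endgame T ℓ z k true _ _ hU₂card.symm hd₂ hU₂X hM₁X _ (by simp)
        intro _
        rw [hcntzM₁, cnt_erase_of_not_mem z hzf]
        omega

end StarGameAux
namespace StarGameAux

variable {V : Type*} [DecidableEq V] [Fintype V] (T : SimpleGraph V) [DecidableRel T.Adj] (ℓ : ℕ)

lemma induce_adj' {A : Set V} {u v : ↑A} : (T.induce A).Adj u v ↔ T.Adj ↑u ↑v := Iff.rfl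

lemma walk_of_induce {A : Set V} : ∀ {a b : ↑A} (_ : (T.induce A).Walk a b),
    ∃ w' : T.Walk ↑a ↑b, ∀ v ∈ w'.support, v ∈ A
  | a, _, SimpleGraph.Walk.nil => ⟨SimpleGraph.Walk.nil, by
      intro v hv
      simp only [SimpleGraph.Walk.support_nil, List.mem_singleton] at hv
      exact hv ▸ a.2⟩
  | a, b, SimpleGraph.Walk.cons h w => by
      obtain ⟨w', hw'⟩ := walk_of_induce w
      refine ⟨SimpleGraph.Walk.cons ((induce_adj' T).1 h) w', ?_⟩
      intro v hv
      rw [SimpleGraph.Walk.support_cons, List.mem_cons] at hv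
      rcases hv with rfl | hv
      · exact a.2
      · exact hw' v hv

lemma induce_reachable_of_walk {A : Set V} : ∀ {a b : V} (w : T.Walk a b)
    (_ : ∀ v ∈ w.support, v ∈ A) (ha : a ∈ A) (hb : b ∈ A),
    (T.induce A).Reachable ⟨a, ha⟩ ⟨b, hb⟩
  | a, _, SimpleGraph.Walk.nil, _, ha, hb => SimpleGraph.Reachable.refl _
  | a, b, SimpleGraph.Walk.cons (v := c) h w, hs, ha, hb => by
      have hc : c ∈ A := hs c (by rw [SimpleGraph.Walk.support_cons]; exact List.mem_cons_of_mem _ w.start_mem_support)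
      have h1 : (T.induce A).Adj ⟨a, ha⟩ ⟨c, hc⟩ := (induce_adj' T).2 h
      exact h1.reachable.trans (induce_reachable_of_walk w
        (fun v hv => hs v (by rw [SimpleGraph.Walk.support_cons]; exact List.mem_cons_of_mem _ hv)) hc hb)

/-- combinatorial connectivity of a vertex finset. -/
def WConn (B : Finset V) : Prop :=
  ∀ p ∈ B, ∀ q ∈ B, ∃ w : T.Walk p q, ∀ v ∈ w.support, v ∈ B

lemma walk_boundary (Bs : Finset V) : ∀ {p q : V} (w : T.Walk p q), p ∈ Bs → q ∉ Bs →
    ∃ y b, y ∉ Bs ∧ b ∈ Bs ∧ T.Adj b y ∧ y ∈ w.support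
  | p, _, SimpleGraph.Walk.nil, hp, hq => absurd hp hq
  | p, q, SimpleGraph.Walk.cons (v := c) h w, hp, hq => by
      by_cases hc : c ∈ Bs
      · obtain ⟨y, b, h1, h2, h3, h4⟩ := walk_boundary Bs w hc hq
        exact ⟨y, b, h1, h2, h3, by rw [SimpleGraph.Walk.support_cons]; exact List.mem_cons_of_mem _ h4⟩
      · exact ⟨c, p, hc, hp, h, by rw [SimpleGraph.Walk.support_cons]; exact List.mem_cons_of_mem _ w.start_mem_support⟩

lemma unique_nbr (hac : T.IsAcyclic) {Bs : Finset V} (hconn : WConn T Bs) {y : V} (hy : y ∉ Bs)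
    {b b' : V} (hb : b ∈ Bs) (hb' : b' ∈ Bs) (h1 : T.Adj b y) (h2 : T.Adj y b') : b = b' := by
  by_contra hne
  obtain ⟨w, hw⟩ := hconn b hb b' hb'
  have hp1 : (SimpleGraph.Walk.cons h1 (SimpleGraph.Walk.cons h2 SimpleGraph.Walk.nil)).IsPath := by
    rw [SimpleGraph.Walk.isPath_def]
    simp [h1.ne, h2.ne, hne]
  have heq := SimpleGraph.isAcyclic_iff_path_unique.1 hac ⟨_, hp1⟩ w.toPath
  have hy1 : y ∈ (w.toPath : T.Walk b b').support := by
    rw [← heq]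
    simp [SimpleGraph.Walk.support_cons]
  exact hy (hw y (SimpleGraph.Walk.support_toPath_subset w hy1))

lemma grow (hac : T.IsAcyclic) (S : Finset V) (hS : WConn T S) :
    ∀ (k : ℕ) (l : List V), l ≠ [] → l.Nodup → GoodList T l → (∀ x ∈ l, x ∈ S) →
      WConn T l.toFinset → k = (S \ l.toFinset).card →
      ∃ l' : List V, GoodList T l' ∧ l'.Nodup ∧ l'.toFinset = S := by
  intro k
  induction k with
  | zero =>
    intro l hne hnd hg hsub _ hcard
    refine ⟨l, hg, hnd, ?_⟩
    have h1 : l.toFinset ⊆ S := fun x hx => hsub x (List.mem_toFinset.1 hx)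
    have h2 : S \ l.toFinset = ∅ := Finset.card_eq_zero.1 hcard.symm
    exact Finset.Subset.antisymm h1 (fun x hx => by
      by_contra hc
      exact Finset.notMem_empty x (h2 ▸ Finset.mem_sdiff.2 ⟨hx, hc⟩))
  | succ k ih =>
    intro l hne hnd hg hsub hBconn hcard
    obtain ⟨q, hq⟩ := Finset.card_pos.1 (show 0 < (S \ l.toFinset).card by omega)
    rw [Finset.mem_sdiff] at hq
    obtain ⟨p, hpl⟩ : ∃ p, p ∈ l := List.exists_mem_of_ne_nil l hne
    have hpS : p ∈ S := hsub p hpl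
    obtain ⟨w, hwS⟩ := hS p hpS q hq.1
    obtain ⟨y, b, hyB, hbB, hadj, hyw⟩ :=
      walk_boundary T l.toFinset w (List.mem_toFinset.2 hpl) hq.2
    have hyS : y ∈ S := hwS y hyw
    have hyl : y ∉ l := fun hc => hyB (List.mem_toFinset.2 hc)
    have hbl : b ∈ l := List.mem_toFinset.1 hbB
    -- y has exactly one neighbor in l
    have huniq : ∀ b' ∈ l, T.Adj y b' → b' = b := by
      intro b' hb' hadj'
      exact (unique_nbr T hac hBconn hyB hbB (List.mem_toFinset.2 hb') hadj hadj').symm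
    have hcnt : l.countP (fun c => decide (T.Adj y c)) = 1 := by
      rw [List.countP_eq_length_filter]
      have hfnd : (l.filter (fun c => decide (T.Adj y c))).Nodup := hnd.filter _
      have hft : (l.filter (fun c => decide (T.Adj y c))).toFinset = {b} := by
        ext c
        simp only [List.mem_toFinset, List.mem_filter, decide_eq_true_eq, Finset.mem_singleton]
        constructor
        · rintro ⟨hcl, hcadj⟩; exact huniq c hcl hcadj
        · rintro rfl; exact ⟨hbl, hadj.symm⟩
      have := List.toFinset_card_of_nodup hfnd
      rw [hft] at this
      simp at this
      omega
    have hgood : GoodList T (y :: l) := by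
      rcases l with _ | ⟨a, l₀⟩
      · exact absurd rfl hne
      · exact ⟨hcnt, hg⟩
    have hnd' : (y :: l).Nodup := List.nodup_cons.2 ⟨hyl, hnd⟩
    have hconn' : WConn T (y :: l).toFinset := by
      rw [List.toFinset_cons]
      intro p₁ hp₁ q₁ hq₁
      rw [Finset.mem_insert] at hp₁ hq₁
      rcases hp₁ with rfl | hp₁ <;> rcases hq₁ with rfl | hq₁
      · exact ⟨SimpleGraph.Walk.nil, by
          intro v hv
          simp only [SimpleGraph.Walk.support_nil, List.mem_singleton] at hv
          exact hv ▸ Finset.mem_insert_self _ _⟩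
      · obtain ⟨w₁, hw₁⟩ := hBconn b hbB q₁ hq₁
        refine ⟨SimpleGraph.Walk.cons hadj.symm w₁, ?_⟩
        intro v hv
        rw [SimpleGraph.Walk.support_cons, List.mem_cons] at hv
        rcases hv with rfl | hv
        · exact Finset.mem_insert_self _ _
        · exact Finset.mem_insert_of_mem (hw₁ v hv)
      · obtain ⟨w₁, hw₁⟩ := hBconn p₁ hp₁ b hbB
        refine ⟨w₁.concat hadj, ?_⟩
        intro v hv
        rw [SimpleGraph.Walk.support_concat, List.mem_append] at hv
        rcases hv with hv | hv
        · exact Finset.mem_insert_of_mem (hw₁ v hv)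
        · rw [List.mem_singleton] at hv
          exact hv ▸ Finset.mem_insert_self _ _
      · obtain ⟨w₁, hw₁⟩ := hBconn p₁ hp₁ q₁ hq₁
        exact ⟨w₁, fun v hv => Finset.mem_insert_of_mem (hw₁ v hv)⟩
    have hsub' : ∀ x ∈ y :: l, x ∈ S := by
      intro x hx
      rcases List.mem_cons.1 hx with rfl | hx
      · exact hyS
      · exact hsub x hx
    have hcard' : k = (S \ (y :: l).toFinset).card := by
      rw [List.toFinset_cons]
      have : S \ insert y l.toFinset = (S \ l.toFinset).erase y := by
        ext c
        simp only [Finset.mem_sdiff, Finset.mem_insert, Finset.mem_erase, not_or]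
        tauto
      rw [this, Finset.card_erase_of_mem (Finset.mem_sdiff.2 ⟨hyS, hyB⟩)]
      omega
    exact ih (y :: l) (List.cons_ne_nil _ _) hnd' hgood hsub' hconn' hcard'

lemma wconn_of_induce_connected (S : Finset V) (hconn : (T.induce (S : Set V)).Connected) :
    WConn T S := by
  intro p hp q hq
  have hp' : p ∈ (S : Set V) := hp
  have hq' : q ∈ (S : Set V) := hq
  obtain ⟨w⟩ := hconn.preconnected ⟨p, hp'⟩ ⟨q, hq'⟩
  obtain ⟨w', hw'⟩ := walk_of_induce T w
  exact ⟨w', fun v hv => hw' v hv⟩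

lemma exists_goodList (hac : T.IsAcyclic) (S : Finset V) (hne : S.Nonempty)
    (hconn : (T.induce (S : Set V)).Connected) :
    ∃ l : List V, GoodList T l ∧ l.Nodup ∧ l.toFinset = S := by
  obtain ⟨x₀, hx₀⟩ := hne
  apply grow T hac S (wconn_of_induce_connected T S hconn) ((S \ [x₀].toFinset).card) [x₀]
  · exact List.cons_ne_nil _ _
  · exact List.nodup_singleton _
  · exact trivial
  · intro x hx; rw [List.mem_singleton] at hx; exact hx ▸ hx₀
  · intro p hp q hq
    simp only [List.toFinset_cons, List.toFinset_nil, LawfulSingleton.insert_empty_eq, Finset.mem_singleton] at hp hq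
    subst hp; subst hq
    exact ⟨SimpleGraph.Walk.nil, by
      intro v hv
      simp only [SimpleGraph.Walk.support_nil, List.mem_singleton] at hv
      simp [hv]⟩
  · rfl

/-- From any "stable" set we can extract a connected stable set (a reachability component). -/
lemma exists_connected_stable (A : Finset V) (hA : A.Nonempty)
    (hst : ∀ x ∈ A, 2*ℓ ≤ T.degree x + (A.filter (fun y => T.Adj x y)).card + 1) :
    ∃ S : Finset V, S.Nonempty ∧ (T.induce (S : Set V)).Connected ∧
      ∀ x ∈ S, 2*ℓ ≤ T.degree x + (S.filter (fun y => T.Adj x y)).card + 1 := by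
  classical
  obtain ⟨x₀, hx₀⟩ := hA
  set S := A.filter (fun y => ∃ w : T.Walk x₀ y, ∀ v ∈ w.support, v ∈ A) with hSdef
  have hSsubA : S ⊆ A := Finset.filter_subset _ _
  have hx₀S : x₀ ∈ S := by
    rw [hSdef, Finset.mem_filter]
    exact ⟨hx₀, SimpleGraph.Walk.nil, by
      intro v hv
      simp only [SimpleGraph.Walk.support_nil, List.mem_singleton] at hv
      exact hv ▸ hx₀⟩
  have hcl : ∀ y ∈ S, ∀ q ∈ A, T.Adj y q → q ∈ S := by
    intro y hy q hq hadj
    rw [hSdef, Finset.mem_filter] at hy ⊢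
    obtain ⟨hyA, w, hw⟩ := hy
    refine ⟨hq, w.concat hadj, ?_⟩
    intro v hv
    rw [SimpleGraph.Walk.support_concat, List.mem_append] at hv
    rcases hv with hv | hv
    · exact hw v hv
    · rw [List.mem_singleton] at hv; exact hv ▸ hq
  have hsupS : ∀ y ∈ S, ∀ (w : T.Walk x₀ y), (∀ v ∈ w.support, v ∈ A) → ∀ v ∈ w.support, v ∈ S := by
    intro y hy w hw v hv
    rw [hSdef, Finset.mem_filter]
    refine ⟨hw v hv, w.takeUntil v hv, ?_⟩
    intro u hu
    exact hw u (SimpleGraph.Walk.support_takeUntil_subset w hv hu)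
  have hnbr : ∀ x ∈ S, A.filter (fun y => T.Adj x y) = S.filter (fun y => T.Adj x y) := by
    intro x hx
    ext q
    simp only [Finset.mem_filter]
    exact ⟨fun ⟨h1, h2⟩ => ⟨hcl x hx q h1 h2, h2⟩, fun ⟨h1, h2⟩ => ⟨hSsubA h1, h2⟩⟩
  refine ⟨S, ⟨x₀, hx₀S⟩, (SimpleGraph.connected_iff _).2 ⟨?_, ?_⟩, ?_⟩
  · rintro ⟨p, hp⟩ ⟨q, hq⟩
    have hpS : p ∈ S := hp
    have hqS : q ∈ S := hq
    have hreach : ∀ r (hr : r ∈ S), (T.induce (S : Set V)).Reachable ⟨x₀, hx₀S⟩ ⟨r, hr⟩ := by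
      intro r hr
      obtain ⟨hrA, w, hw⟩ := Finset.mem_filter.1 (hSdef ▸ hr)
      exact induce_reachable_of_walk T w
        (fun v hv => hsupS r hr w hw v hv) hx₀S hr
    exact (hreach p hpS).symm.trans (hreach q hqS)
  · exact ⟨⟨x₀, hx₀S⟩⟩
  · intro x hx
    rw [← hnbr x hx]
    exact hst x (hSsubA hx)

end StarGameAux

namespace StarGameAux

lemma no_both {α : Type*} [DecidableEq α] (F : Set (Finset α)) :
    ∀ (n : ℕ) (b : Bool) (U M B : Finset α), Disjoint M B → Disjoint U M → Disjoint U B →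
      MWin (fun M => ∃ W ∈ F, W ⊆ M) n b U M →
      BWin (fun B => ∀ W ∈ F, ∃ e ∈ W, e ∈ B) n b U B → False
  | 0, _, U, M, B, hMB, _, _, hM, hB => by
      obtain ⟨W, hWF, hWM⟩ := hM
      obtain ⟨e, heW, heB⟩ := hB W hWF
      exact Finset.disjoint_left.1 hMB (hWM heW) heB
  | n+1, true, U, M, B, hMB, hUM, hUB, hM, hB => by
      obtain ⟨e, heU, hM'⟩ := hM
      refine no_both F n false (U.erase e) (insert e M) B ?_ ?_ ?_ hM' (hB e heU)
      · exact Finset.disjoint_insert_left.2 ⟨Finset.disjoint_left.1 hUB heU, hMB⟩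
      · exact Finset.disjoint_insert_right.2
          ⟨Finset.notMem_erase _ _, hUM.mono_left (Finset.erase_subset _ _)⟩
      · exact hUB.mono_left (Finset.erase_subset _ _)
  | n+1, false, U, M, B, hMB, hUM, hUB, hM, hB => by
      obtain ⟨e, heU, hB'⟩ := hB
      refine no_both F n true (U.erase e) M (insert e B) ?_ ?_ ?_ (hM e heU) hB'
      · exact Finset.disjoint_insert_right.2 ⟨Finset.disjoint_left.1 hUM heU, hMB⟩
      · exact hUM.mono_left (Finset.erase_subset _ _)
      · exact Finset.disjoint_insert_right.2
          ⟨Finset.notMem_erase _ _, hUB.mono_left (Finset.erase_subset _ _)⟩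

lemma breaker_beats_maker {α : Type*} [DecidableEq α] (X : Finset α) (F : Set (Finset α))
    (hB : BreakerWins X F) (hM : MakerWins X F) : False :=
  no_both F X.card true X ∅ ∅ (Finset.disjoint_empty_left _) (Finset.disjoint_empty_right _)
    (Finset.disjoint_empty_right _) hM hB

variable {V : Type*} [DecidableEq V] [Fintype V] (T : SimpleGraph V) [DecidableRel T.Adj] (ℓ : ℕ)

lemma eCnt_eq_filter_card {l : List V} (hnd : l.Nodup) (x : V) :
    eCnt T l x = (l.toFinset.filter (fun y => T.Adj x y)).card := by
  rw [eCnt, List.countP_eq_length_filter,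
    ← List.toFinset_card_of_nodup (hnd.filter (fun y => decide (T.Adj x y))),
    List.toFinset_filter]
  congr 1
  apply Finset.filter_congr
  intro y _
  simp

/-- the `⇐` direction of the theorem. -/
lemma maker_of_subtree (hac : T.IsAcyclic) (S : Finset V) (hne : S.Nonempty)
    (hconn : (T.induce (S : Set V)).Connected)
    (hdeg : ∀ x ∈ S, 2*ℓ ≤ T.degree x + (S.filter (fun y => T.Adj x y)).card + 1) :
    MakerWins T.edgeFinset (starSets T ℓ) := by
  obtain ⟨l, hg, hnd, hlS⟩ := exists_goodList T hac S hne hconn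
  show MWin (P T ℓ) T.edgeFinset.card true T.edgeFinset ∅
  apply tree_win T ℓ l hg hnd T.edgeFinset.card T.edgeFinset ∅ rfl
    (Finset.disjoint_empty_right _) (le_refl _) (Finset.empty_subset _)
  · intro x _ y _ hadj
    rw [SimpleGraph.mem_edgeFinset]
    exact hadj
  · intro x hx
    have h0 : cnt x (∅ : Finset (Sym2 V)) = 0 := by simp [cnt]
    rw [h0, cnt_edgeFinset, eCnt_eq_filter_card T hnd, hlS]
    have := hdeg x (by rw [← hlS]; exact List.mem_toFinset.2 hx)
    omega

end StarGameAux
namespace StarGameAux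

variable {V : Type*} [DecidableEq V] [Fintype V] (T : SimpleGraph V) [DecidableRel T.Adj] (ℓ : ℕ)

lemma other_eq {e : Sym2 V} {a x : V} (ha : a ∈ e) (hx : x ∈ e) (hne : x ≠ a) :
    x = Sym2.Mem.other' ha := by
  rw [← Sym2.other_spec' ha, Sym2.mem_iff] at hx
  tauto

lemma charge_exists
    (hns : ∀ A : Finset V, A.Nonempty →
      ¬ (∀ x ∈ A, 2*ℓ ≤ T.degree x + (A.filter (fun y => T.Adj x y)).card + 1)) :
    ∀ A : Finset V, ∃ c : Sym2 V → V, (∀ e ∈ T.edgeFinset, c e ∈ e) ∧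
      ∀ x ∈ A, T.degree x
        + (T.edgeFinset.filter (fun e => x ∈ e ∧ e ∈ A.sym2 ∧ c e ≠ x)).card + 2 ≤ 2*ℓ := by
  intro A
  induction A using Finset.strongInduction with
  | _ A ih =>
    rcases Finset.eq_empty_or_nonempty A with rfl | hA
    · exact ⟨fun e => e.out.1, fun e _ => Sym2.out_fst_mem e, by simp⟩
    · have hbad := hns A hA
      push_neg at hbad
      obtain ⟨x₀, hx₀A, hx₀⟩ := hbad
      obtain ⟨c', hc'1, hc'2⟩ := ih (A.erase x₀) (Finset.erase_ssubset hx₀A)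
      refine ⟨fun e => if h : x₀ ∈ e ∧ e ∈ A.sym2 then Sym2.Mem.other' h.1 else c' e, ?_, ?_⟩
      · intro e he
        by_cases h : x₀ ∈ e ∧ e ∈ A.sym2
        · simp only [dif_pos h]; exact Sym2.other_mem' h.1
        · simp only [dif_neg h]; exact hc'1 e he
      · intro x hxA
        beta_reduce
        by_cases hx : x = x₀
        · subst hx
          have hle : (T.edgeFinset.filter (fun e => x ∈ e ∧ e ∈ A.sym2 ∧
              (if h : x ∈ e ∧ e ∈ A.sym2 then Sym2.Mem.other' h.1 else c' e) ≠ x)).card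
              ≤ (A.filter (fun y => T.Adj x y)).card := by
            rw [cnt_filter_eq T x (fun e => e ∈ A.sym2 ∧
              (if h : x ∈ e ∧ e ∈ A.sym2 then Sym2.Mem.other' h.1 else c' e) ≠ x)]
            have hsub : (T.neighborFinset x).filter (fun y => s(x,y) ∈ A.sym2 ∧
                (if h : x ∈ s(x,y) ∧ s(x,y) ∈ A.sym2 then Sym2.Mem.other' h.1 else c' s(x,y)) ≠ x)
                ⊆ A.filter (fun y => T.Adj x y) := by
              intro y hy
              simp only [Finset.mem_filter, SimpleGraph.mem_neighborFinset] at hy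
              refine Finset.mem_filter.2 ⟨?_, hy.1⟩
              exact Finset.mem_sym2_iff.1 hy.2.1 y (Sym2.mem_mk_right x y)
            exact Finset.card_le_card hsub
          omega
        · have hxA' : x ∈ A.erase x₀ := Finset.mem_erase.2 ⟨hx, hxA⟩
          have hle : (T.edgeFinset.filter (fun e => x ∈ e ∧ e ∈ A.sym2 ∧
              (if h : x₀ ∈ e ∧ e ∈ A.sym2 then Sym2.Mem.other' h.1 else c' e) ≠ x)).card
              ≤ (T.edgeFinset.filter (fun e => x ∈ e ∧ e ∈ (A.erase x₀).sym2 ∧ c' e ≠ x)).card := by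
            apply Finset.card_le_card
            intro e he
            simp only [Finset.mem_filter] at he ⊢
            obtain ⟨heX, hxe, heA, hce⟩ := he
            by_cases h : x₀ ∈ e ∧ e ∈ A.sym2
            · exfalso
              rw [dif_pos h] at hce
              exact hce (other_eq h.1 hxe hx).symm
            · rw [dif_neg h] at hce
              have hx₀e : x₀ ∉ e := fun hc => h ⟨hc, heA⟩
              refine ⟨heX, hxe, ?_, hce⟩
              rw [Finset.mem_sym2_iff]
              intro v hv
              exact Finset.mem_erase.2 ⟨fun hc => hx₀e (hc ▸ hv), Finset.mem_sym2_iff.1 heA v hv⟩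
          have := hc'2 x hxA'
          omega

end StarGameAux
namespace StarGameAux

lemma card_filter_insert {α : Type*} [DecidableEq α] (p : α → Prop) [DecidablePred p]
    {e : α} {F : Finset α} (he : e ∉ F) :
    ((insert e F).filter p).card = (F.filter p).card + if p e then 1 else 0 := by
  rw [Finset.filter_insert]
  split
  · rw [Finset.card_insert_of_notMem (fun hc => he (Finset.filter_subset _ _ hc))]
  · omega

variable {V : Type*} [DecidableEq V] [Fintype V] (T : SimpleGraph V) [DecidableRel T.Adj] (ℓ : ℕ)
  (c : Sym2 V → V)

/-- number of edges at `x` charged away from `x`. -/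
def oCnt (x : V) : ℕ := (T.edgeFinset.filter (fun e => x ∈ e ∧ c e ≠ x)).card

/-- number of Maker edges at `x` charged to `x`. -/
def mCnt (U B : Finset (Sym2 V)) (x : V) : ℕ :=
  (((T.edgeFinset \ U) \ B).filter (fun e => x ∈ e ∧ c e = x)).card

def InvB (U B : Finset (Sym2 V)) : Prop :=
  U ⊆ T.edgeFinset ∧ B ⊆ T.edgeFinset ∧ Disjoint U B ∧
    ∀ x, (0 < cnt x U → mCnt T c U B x ≤ cnt x B) ∧ (cnt x U = 0 → mCnt T c U B x ≤ cnt x B + 1)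

lemma breaker_final (hbound : ∀ x, T.degree x + oCnt T c x + 2 ≤ 2*ℓ)
    (B : Finset (Sym2 V)) (hBX : B ⊆ T.edgeFinset)
    (hm : ∀ x, ((T.edgeFinset \ B).filter (fun e => x ∈ e ∧ c e = x)).card ≤ cnt x B + 1) :
    ∀ W ∈ starSets T ℓ, ∃ e ∈ W, e ∈ B := by
  intro W hW
  by_contra hcon
  push_neg at hcon
  obtain ⟨hWE, hWcard, v, hv⟩ := hW
  have hWM : W ⊆ T.edgeFinset \ B := fun e he =>
    Finset.mem_sdiff.2 ⟨SimpleGraph.mem_edgeFinset.2 (hWE e he), hcon e he⟩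
  have h1 : ℓ ≤ cnt v (T.edgeFinset \ B) := by
    rw [← hWcard]
    apply Finset.card_le_card
    intro e he
    exact Finset.mem_filter.2 ⟨hWM he, hv e he⟩
  have hsplit := cnt_split v (T.edgeFinset \ B) (fun e => c e = v)
  have hmo : ((T.edgeFinset \ B).filter (fun e => v ∈ e ∧ ¬ c e = v)).card ≤ oCnt T c v :=
    Finset.card_le_card (Finset.filter_subset_filter _ Finset.sdiff_subset)
  have hMB : cnt v (T.edgeFinset \ B) + cnt v B ≤ T.degree v := by
    rw [← cnt_edgeFinset T v]
    unfold cnt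
    rw [← Finset.card_union_of_disjoint ((Finset.sdiff_disjoint).mono
      (Finset.filter_subset _ _) (Finset.filter_subset _ _))]
    apply Finset.card_le_card
    rw [← Finset.filter_union]
    apply Finset.filter_subset_filter
    intro g hg
    rcases Finset.mem_union.1 hg with hg | hg
    · exact (Finset.mem_sdiff.1 hg).1
    · exact hBX hg
  have := hbound v
  have := hm v
  omega

lemma breaker_step (hc : ∀ e ∈ T.edgeFinset, c e ∈ e)
    (hbound : ∀ x, T.degree x + oCnt T c x + 2 ≤ 2*ℓ) :
    ∀ (n : ℕ) (U B : Finset (Sym2 V)), n = U.card → InvB T c U B →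
      BWin (fun B => ∀ W ∈ starSets T ℓ, ∃ e ∈ W, e ∈ B) n true U B
  | 0, U, B, hn, hinv => by
      have hU : U = ∅ := by rw [← Finset.card_eq_zero]; omega
      subst hU
      show ∀ W ∈ starSets T ℓ, ∃ e ∈ W, e ∈ B
      apply breaker_final T ℓ c hbound B hinv.2.1
      intro x
      have h := (hinv.2.2.2 x).2 (by simp [cnt])
      rwa [mCnt, Finset.sdiff_empty] at h
  | 1, U, B, hn, hinv => by
      intro e he
      obtain ⟨hUX, hBX, hUB, hx⟩ := hinv
      have heX : e ∈ T.edgeFinset := hUX he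
      have heB : e ∉ B := Finset.disjoint_left.1 hUB he
      show ∀ W ∈ starSets T ℓ, ∃ g ∈ W, g ∈ B
      apply breaker_final T ℓ c hbound B hBX
      intro x
      have hUe : U = {e} := by
        obtain ⟨a, ha⟩ := Finset.card_eq_one.1 hn.symm
        have hea : e = a := Finset.mem_singleton.1 (ha ▸ he)
        rw [ha, hea]
      have hMid : T.edgeFinset \ B = insert e ((T.edgeFinset \ U) \ B) := by
        ext g
        simp only [Finset.mem_sdiff, Finset.mem_insert, hUe, Finset.mem_singleton]
        constructor
        · rintro ⟨hgX, hgB⟩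
          by_cases hge : g = e
          · exact Or.inl hge
          · exact Or.inr ⟨⟨hgX, hge⟩, hgB⟩
        · rintro (rfl | ⟨⟨hgX, _⟩, hgB⟩)
          · exact ⟨heX, heB⟩
          · exact ⟨hgX, hgB⟩
      have heM : e ∉ (T.edgeFinset \ U) \ B := by simp [he]
      rw [hMid, card_filter_insert _ heM]
      by_cases hcase : x ∈ e ∧ c e = x
      · rw [if_pos hcase]
        have : 0 < cnt x U := by
          rw [hUe]
          exact Finset.card_pos.2 ⟨e, Finset.mem_filter.2 ⟨Finset.mem_singleton_self e, hcase.1⟩⟩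
        have := (hx x).1 this
        unfold mCnt at this
        omega
      · rw [if_neg hcase]
        rcases Nat.eq_zero_or_pos (cnt x U) with h0 | h0
        · have := (hx x).2 h0; unfold mCnt at this; omega
        · have := (hx x).1 h0; unfold mCnt at this; omega
  | (k+2), U, B, hn, hinv => by
      intro e he
      obtain ⟨hUX, hBX, hUB, hx⟩ := hinv
      have heX : e ∈ T.edgeFinset := hUX he
      have heB : e ∉ B := Finset.disjoint_left.1 hUB he
      have hx₀e : c e ∈ e := hc e heX
      -- pick Breaker's response
      have hpick : ∃ f ∈ U.erase e, (∃ g ∈ U.erase e, c e ∈ g) → c e ∈ f := by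
        by_cases hresp : ∃ g ∈ U.erase e, c e ∈ g
        · obtain ⟨g, hg1, hg2⟩ := hresp
          exact ⟨g, hg1, fun _ => hg2⟩
        · have hne : (U.erase e).Nonempty := by
            apply Finset.card_pos.1
            rw [Finset.card_erase_of_mem he]
            omega
          obtain ⟨g, hg⟩ := hne
          exact ⟨g, hg, fun hcon => absurd hcon hresp⟩
      obtain ⟨f, hf, hfprop⟩ := hpick
      have hfU : f ∈ U := Finset.mem_of_mem_erase hf
      have hfe : f ≠ e := Finset.ne_of_mem_erase hf
      have hfB : f ∉ B := Finset.disjoint_left.1 hUB hfU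
      refine ⟨f, hf, breaker_step hc hbound k ((U.erase e).erase f) (insert f B) ?_ ?_⟩
      · rw [Finset.card_erase_of_mem hf, Finset.card_erase_of_mem he]
        omega
      · have hMid : (T.edgeFinset \ ((U.erase e).erase f)) \ (insert f B)
            = insert e ((T.edgeFinset \ U) \ B) := by
          ext g
          simp only [Finset.mem_sdiff, Finset.mem_erase, Finset.mem_insert, not_or]
          constructor
          · rintro ⟨⟨hgX, hgU⟩, hgf, hgB⟩
            by_cases hge : g = e
            · exact Or.inl hge
            · exact Or.inr ⟨⟨hgX, fun hgUmem => hgU ⟨hgf, hge, hgUmem⟩⟩, hgB⟩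
          · rintro (rfl | ⟨⟨hgX, hgU⟩, hgB⟩)
            · exact ⟨⟨heX, fun h => h.2.1 rfl⟩, fun h => hfe h.symm, heB⟩
            · exact ⟨⟨hgX, fun h => hgU h.2.2⟩, fun h => hgU (h ▸ hfU), hgB⟩
        have heM : e ∉ (T.edgeFinset \ U) \ B := by simp [he]
        refine ⟨((Finset.erase_subset _ _).trans (Finset.erase_subset _ _)).trans hUX,
          Finset.insert_subset (hUX hfU) hBX,
          Finset.disjoint_insert_right.2 ⟨Finset.notMem_erase _ _,
            hUB.mono_left ((Finset.erase_subset _ _).trans (Finset.erase_subset _ _))⟩, ?_⟩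
        intro x
        have hmEq : mCnt T c ((U.erase e).erase f) (insert f B) x
            = mCnt T c U B x + (if x ∈ e ∧ c e = x then 1 else 0) := by
          unfold mCnt
          rw [hMid, card_filter_insert _ heM]
        have hbEq : cnt x (insert f B) = cnt x B + (if x ∈ f then 1 else 0) := by
          by_cases hxf : x ∈ f
          · rw [cnt_insert_of_mem x hxf hfB, if_pos hxf]
          · rw [cnt_insert_of_not_mem x hxf, if_neg hxf]
            omega
        have hUmono : cnt x ((U.erase e).erase f) ≤ cnt x U :=
          cnt_le_of_subset x ((Finset.erase_subset _ _).trans (Finset.erase_subset _ _))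
        by_cases hxx : x ∈ e ∧ c e = x
        · have hx₀U : 0 < cnt x U :=
            Finset.card_pos.2 ⟨e, Finset.mem_filter.2 ⟨he, hxx.1⟩⟩
          have hmold := (hx x).1 hx₀U
          by_cases hxf : x ∈ f
          · constructor
            · intro _
              rw [hmEq, hbEq, if_pos hxx, if_pos hxf]
              omega
            · intro _
              rw [hmEq, hbEq, if_pos hxx, if_pos hxf]
              omega
          · have hnog : ¬ ∃ g ∈ U.erase e, c e ∈ g := by
              intro hcon
              exact hxf (hxx.2 ▸ hfprop hcon)
            have hcnt0 : cnt x (U.erase e) = 0 := by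
              by_contra hpos
              obtain ⟨g, hg1, hg2⟩ := exists_mem_of_cnt_pos (Nat.pos_of_ne_zero hpos)
              exact hnog ⟨g, hg1, hxx.2.symm ▸ hg2⟩
            have hcnt0' : cnt x ((U.erase e).erase f) = 0 := by
              have := cnt_le_of_subset (F := (U.erase e).erase f) (F' := U.erase e) x
                (Finset.erase_subset _ _)
              omega
            constructor
            · intro hpos
              omega
            · intro _
              rw [hmEq, hbEq, if_pos hxx, if_neg hxf]
              omega
        · rw [hmEq, hbEq, if_neg hxx]
          by_cases hUpos : 0 < cnt x U
          · have := (hx x).1 hUpos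
            constructor <;> intro _ <;> omega
          · have := (hx x).2 (by omega)
            have : cnt x ((U.erase e).erase f) = 0 := by omega
            constructor <;> intro _ <;> omega

end StarGameAux
namespace StarGameAux

variable {V : Type*} [DecidableEq V] [Fintype V] (T : SimpleGraph V) [DecidableRel T.Adj] (ℓ : ℕ)

lemma breaker_of_no_subtree
    (h : ¬ ∃ S : Finset V, S.Nonempty ∧ (T.induce (S : Set V)).Connected ∧
        ∀ x ∈ S, 2 * ℓ - 1 ≤ T.degree x + (S.filter fun y => T.Adj x y).card) :
    BreakerWins T.edgeFinset (starSets T ℓ) := by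
  have hns : ∀ A : Finset V, A.Nonempty →
      ¬ (∀ x ∈ A, 2*ℓ ≤ T.degree x + (A.filter (fun y => T.Adj x y)).card + 1) := by
    intro A hA hst
    obtain ⟨S, h1, h2, h3⟩ := exists_connected_stable T ℓ A hA hst
    exact h ⟨S, h1, h2, fun x hx => by have := h3 x hx; omega⟩
  obtain ⟨c, hc1, hc2⟩ := charge_exists T ℓ hns Finset.univ
  have hbound : ∀ x, T.degree x + oCnt T c x + 2 ≤ 2*ℓ := by
    intro x
    have h2 := hc2 x (Finset.mem_univ x)
    have heq : (T.edgeFinset.filter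
        (fun e => x ∈ e ∧ e ∈ (Finset.univ : Finset V).sym2 ∧ c e ≠ x))
        = T.edgeFinset.filter (fun e => x ∈ e ∧ c e ≠ x) := by
      apply Finset.filter_congr
      intro e _
      simp [Finset.mem_sym2_iff]
    rw [heq] at h2
    unfold oCnt
    omega
  show BWin _ _ _ _ _
  apply breaker_step T ℓ c hc1 hbound _ _ _ rfl
  refine ⟨le_refl _, Finset.empty_subset _, Finset.disjoint_empty_right _, fun x => ?_⟩
  have hm0 : mCnt T c T.edgeFinset ∅ x = 0 := by
    simp [mCnt]
  constructor <;> intro _ <;> omega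

theorem main {V : Type*} [Fintype V] [DecidableEq V]
    (T : SimpleGraph V) [DecidableRel T.Adj] (hT : T.IsTree) (ℓ : ℕ) (hℓ : 1 ≤ ℓ) :
    MakerWins T.edgeFinset (starSets T ℓ) ↔
      ∃ S : Finset V, S.Nonempty ∧ (T.induce (S : Set V)).Connected ∧
        ∀ x ∈ S, 2 * ℓ - 1 ≤ T.degree x + (S.filter fun y => T.Adj x y).card := by
  constructor
  · intro hM
    by_contra hno
    exact breaker_beats_maker _ _ (breaker_of_no_subtree T ℓ hno) hM
  · rintro ⟨S, h1, h2, h3⟩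
    exact maker_of_subtree T ℓ hT.2 S h1 h2 (fun x hx => by have := h3 x hx; omega)

end StarGameAux


/-- **Characterization of the `K_{1,ℓ}`-game on trees.** Maker wins the `K_{1,ℓ}`-game on a
tree `T` iff there is a nonempty connected subtree, given by its vertex set `S`, such that
every `x ∈ S` satisfies `deg_T(x) ≥ 2ℓ - 1 - deg_{T'}(x)`, i.e.
`deg_T(x) + deg_{T'}(x) ≥ 2ℓ - 1`, where `deg_{T'}(x)` is the number of neighbors of `x`
inside `S`. -/
theorem stmt6 {V : Type*} [Fintype V] [DecidableEq V]
    (T : SimpleGraph V) [DecidableRel T.Adj] (hT : T.IsTree) (ℓ : ℕ) (hℓ : 1 ≤ ℓ) :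
    MakerWins T.edgeFinset (starSets T ℓ) ↔
      ∃ S : Finset V, S.Nonempty ∧ (T.induce (S : Set V)).Connected ∧
        ∀ x ∈ S, 2 * ℓ - 1 ≤ T.degree x + (S.filter fun y => T.Adj x y).card := by
  exact StarGameAux.main T hT ℓ hℓ
end

section
/- If G is a bipartite graph with bipartition (A, B) such that every vertex of degree at least 3 lies in A (equivalently, every vertex of B has degree at most 2), then Breaker has a winning strategy in the P₄-game on G. -/
open Finset

variable {α : Type*} [DecidableEq α]

open SimpleGraph

/-- Winning sets of the `P₄`-game on `G`: edge sets of paths of `G` on 4 distinct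
vertices (3 edges). -/
def p4Sets {V : Type*} [DecidableEq V] (G : SimpleGraph V) : Set (Finset (Sym2 V)) :=
  {W | ∃ a b c d : V, a ≠ b ∧ a ≠ c ∧ a ≠ d ∧ b ≠ c ∧ b ≠ d ∧ c ≠ d ∧
    G.Adj a b ∧ G.Adj b c ∧ G.Adj c d ∧ W = {s(a, b), s(b, c), s(c, d)}}

theorem pairing_breaker {X : Finset α} {F : Set (Finset α)} (f : α → α)
    (hinv : ∀ e, f (f e) = e)
    (hF : ∀ W ∈ F, ∃ e ∈ W, f e ∈ W ∧ f e ≠ e ∧ e ∈ X ∧ f e ∈ X) :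
    BreakerWins X F := by
  suffices h : ∀ n (U B : Finset α), U.card = n →
      (∀ e, f e ≠ e → e ∈ X → f e ∈ X → (e ∈ U ∧ f e ∈ U) ∨ e ∈ B ∨ f e ∈ B) →
      BWin (fun B => ∀ W ∈ F, ∃ e ∈ W, e ∈ B) n true U B by
    exact h X.card X ∅ rfl (fun e _ h2 h3 => Or.inl ⟨h2, h3⟩)
  intro n
  induction n using Nat.strong_induction_on with
  | _ n ih =>
    intro U B hcard hInv
    match n, hcard with
    | 0, hcard =>
      intro W hW
      obtain ⟨e, heW, hfW, hne, heX, hfX⟩ := hF W hW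
      have hU : U = ∅ := Finset.card_eq_zero.mp hcard
      rcases hInv e hne heX hfX with ⟨h1, _⟩ | h | h
      · simp [hU] at h1
      · exact ⟨e, heW, h⟩
      · exact ⟨f e, hfW, h⟩
    | 1, hcard =>
      intro e _ W hW
      obtain ⟨e0, he0, hf0, hne, heX, hfX⟩ := hF W hW
      rcases hInv e0 hne heX hfX with ⟨h1, h2⟩ | h | h
      · obtain ⟨a, ha⟩ := Finset.card_eq_one.mp hcard
        rw [ha, Finset.mem_singleton] at h1 h2
        exact absurd (h2.trans h1.symm) hne
      · exact ⟨e0, he0, h⟩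
      · exact ⟨f e0, hf0, h⟩
    | (m+2), hcard =>
      intro e he
      have hcard' : (U.erase e).card = m + 1 := by
        rw [Finset.card_erase_of_mem he, hcard]; omega
      by_cases hpair : f e ≠ e ∧ f e ∈ U.erase e
      · refine ⟨f e, hpair.2, ih m (by omega) _ _ ?_ ?_⟩
        · rw [Finset.card_erase_of_mem hpair.2, hcard']; omega
        · intro e0 hne0 h0X hf0X
          rcases hInv e0 hne0 h0X hf0X with ⟨h1, h2⟩ | h | h
          · by_cases h0e : e0 = e
            · subst h0e; exact Or.inr (Or.inr (Finset.mem_insert_self _ _))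
            · by_cases h0fe : e0 = f e
              · exact Or.inr (Or.inl (h0fe ▸ Finset.mem_insert_self _ _))
              · by_cases hf0e : f e0 = e
                · have : e0 = f e := by rw [← hf0e, hinv]
                  exact absurd this h0fe
                · by_cases hf0fe : f e0 = f e
                  · have : e0 = e := by
                      have := congrArg f hf0fe; rwa [hinv, hinv] at this
                    exact absurd this h0e
                  · exact Or.inl ⟨Finset.mem_erase.mpr ⟨h0fe,
                      Finset.mem_erase.mpr ⟨h0e, h1⟩⟩,
                      Finset.mem_erase.mpr ⟨hf0fe, Finset.mem_erase.mpr ⟨hf0e, h2⟩⟩⟩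
          · exact Or.inr (Or.inl (Finset.mem_insert_of_mem h))
          · exact Or.inr (Or.inr (Finset.mem_insert_of_mem h))
      · obtain ⟨e', he'⟩ : (U.erase e).Nonempty := by
          rw [← Finset.card_pos, hcard']; omega
        refine ⟨e', he', ih m (by omega) _ _ ?_ ?_⟩
        · rw [Finset.card_erase_of_mem he', hcard']; omega
        · intro e0 hne0 h0X hf0X
          rcases hInv e0 hne0 h0X hf0X with ⟨h1, h2⟩ | h | h
          · by_cases h0e' : e0 = e'
            · exact Or.inr (Or.inl (h0e' ▸ Finset.mem_insert_self _ _))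
            by_cases hf0e' : f e0 = e'
            · exact Or.inr (Or.inr (hf0e' ▸ Finset.mem_insert_self _ _))
            have h0e : e0 ≠ e := by
              rintro rfl
              exact hpair ⟨hne0, Finset.mem_erase.mpr ⟨hne0, h2⟩⟩
            have hf0e : f e0 ≠ e := by
              rintro hfe
              apply hpair
              have hfee : f e = e0 := by rw [← hfe, hinv]
              refine ⟨?_, Finset.mem_erase.mpr ⟨?_, hfee ▸ h1⟩⟩ <;>
                · rw [hfee]; exact fun hh => hne0 (hfe.trans hh.symm)
            exact Or.inl ⟨Finset.mem_erase.mpr ⟨h0e', Finset.mem_erase.mpr ⟨h0e, h1⟩⟩,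
              Finset.mem_erase.mpr ⟨hf0e', Finset.mem_erase.mpr ⟨hf0e, h2⟩⟩⟩
          · exact Or.inr (Or.inl (Finset.mem_insert_of_mem h))
          · exact Or.inr (Or.inr (Finset.mem_insert_of_mem h))


section P4Aux
variable {V : Type*} [Fintype V] [DecidableEq V]

/-- The pairing condition: `e'` is the partner of `e` at some degree-2 vertex outside `A`. -/
def P4Pair (G : SimpleGraph V) [DecidableRel G.Adj] (A : Set V) (e e' : Sym2 V) : Prop :=
  e' ≠ e ∧ ∃ v, v ∉ A ∧ e ∈ G.incidenceFinset v ∧ G.incidenceFinset v = {e, e'}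

open scoped Classical in
noncomputable def p4f (G : SimpleGraph V) [DecidableRel G.Adj] (A : Set V) :
    Sym2 V → Sym2 V := fun e =>
  if h : ∃ e', P4Pair G A e e' then h.choose else e

theorem P4Pair_unique {G : SimpleGraph V} [DecidableRel G.Adj] {A : Set V}
    (hbip : ∀ u v : V, G.Adj u v → (u ∈ A ↔ v ∉ A)) {e e₁ e₂ : Sym2 V}
    (h1 : P4Pair G A e e₁) (h2 : P4Pair G A e e₂) : e₁ = e₂ := by
  obtain ⟨hne1, v, hvA, hev, hv⟩ := h1
  obtain ⟨hne2, w, hwA, hew, hw⟩ := h2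
  rw [mem_incidenceFinset] at hev hew
  obtain ⟨heE, hve⟩ := hev
  obtain ⟨-, hwe⟩ := hew
  obtain ⟨y, rfl⟩ := Sym2.mem_iff_exists.mp hve
  have hadj : G.Adj v y := G.mem_edgeSet.mp heE
  have hwy : w = v ∨ w = y := Sym2.mem_iff.mp hwe
  have hvw : v = w := by
    rcases hwy with h | h
    · exact h.symm
    · exfalso
      subst h
      exact hvA ((hbip v w hadj).mpr hwA)
  subst hvw
  have : e₁ ∈ ({s(v, y), e₂} : Finset (Sym2 V)) := by
    rw [← hw, hv]; exact mem_insert_of_mem (mem_singleton_self _)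
  rcases mem_insert.mp this with h | h
  · exact absurd h hne1
  · exact mem_singleton.mp h

theorem p4f_eq {G : SimpleGraph V} [DecidableRel G.Adj] {A : Set V}
    (hbip : ∀ u v : V, G.Adj u v → (u ∈ A ↔ v ∉ A)) {e e' : Sym2 V}
    (h : P4Pair G A e e') : p4f G A e = e' := by
  have hex : ∃ e', P4Pair G A e e' := ⟨e', h⟩
  rw [p4f, dif_pos hex]
  exact P4Pair_unique hbip hex.choose_spec h

theorem p4f_invol {G : SimpleGraph V} [DecidableRel G.Adj] {A : Set V}
    (hbip : ∀ u v : V, G.Adj u v → (u ∈ A ↔ v ∉ A)) (e : Sym2 V) :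
    p4f G A (p4f G A e) = e := by
  by_cases hex : ∃ e', P4Pair G A e e'
  · have hspec : P4Pair G A e (p4f G A e) := by
      rw [p4f, dif_pos hex]; exact hex.choose_spec
    obtain ⟨hne, v, hvA, hev, hv⟩ := hspec
    refine p4f_eq hbip ⟨fun hh => hne hh.symm, v, hvA, ?_, ?_⟩
    · rw [hv]; exact mem_insert_of_mem (mem_singleton_self _)
    · rw [hv, pair_comm]
  · have h1 : p4f G A e = e := by rw [p4f, dif_neg hex]
    rw [h1, h1]

theorem incidence_eq_pair {G : SimpleGraph V} [DecidableRel G.Adj] {A : Set V}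
    (hdeg : ∀ v : V, v ∉ A → G.degree v ≤ 2) {v x y : V} (hvA : v ∉ A)
    (hx : G.Adj v x) (hy : G.Adj v y) (hxy : x ≠ y) :
    G.incidenceFinset v = {s(v, x), s(v, y)} := by
  have hsub : {s(v, x), s(v, y)} ⊆ G.incidenceFinset v := by
    intro e he
    rw [mem_incidenceFinset]
    rcases mem_insert.mp he with h | h
    · subst h; exact ⟨G.mem_edgeSet.mpr hx, Sym2.mem_mk_left v x⟩
    · rw [mem_singleton] at h; subst h
      exact ⟨G.mem_edgeSet.mpr hy, Sym2.mem_mk_left v y⟩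
  have hne : s(v, x) ≠ s(v, y) := by
    intro hh
    rw [Sym2.eq_iff] at hh
    rcases hh with ⟨-, h⟩ | ⟨h, -⟩
    · exact hxy h
    · exact hy.ne h
  have hcard : (G.incidenceFinset v).card ≤ ({s(v, x), s(v, y)} : Finset (Sym2 V)).card := by
    rw [card_incidenceFinset_eq_degree, card_insert_of_notMem (by simpa using hne),
      card_singleton]
    exact hdeg v hvA
  exact (Finset.eq_of_subset_of_card_le hsub hcard).symm

end P4Aux

/-- If `G` is bipartite with bipartition `(A, B)` such that every vertex of degree at
least 3 lies in `A`, then Breaker wins the `P₄`-game on `G`. -/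
theorem stmt7 {V : Type*} [Fintype V] [DecidableEq V]
    (G : SimpleGraph V) [DecidableRel G.Adj] (A : Set V)
    (hbip : ∀ u v : V, G.Adj u v → (u ∈ A ↔ v ∉ A))
    (hdeg : ∀ v : V, v ∉ A → G.degree v ≤ 2) :
    BreakerWins G.edgeFinset (p4Sets G) := by
  refine pairing_breaker (p4f G A) (p4f_invol hbip) ?_
  rintro W ⟨a, b, c, d, hab, hac, had, hbc, hbd, hcd, Hab, Hbc, Hcd, rfl⟩
  by_cases hbA : b ∈ A
  · have hcA : c ∉ A := (hbip b c Hbc).mp hbA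
    have hinc : G.incidenceFinset c = {s(c, b), s(c, d)} :=
      incidence_eq_pair hdeg hcA Hbc.symm Hcd hbd
    have hpair : P4Pair G A s(b, c) s(c, d) := by
      refine ⟨?_, c, hcA, ?_, ?_⟩
      · intro h
        rw [Sym2.eq_iff] at h
        rcases h with ⟨h, -⟩ | ⟨-, h⟩
        · exact hbc h.symm
        · exact hbd h.symm
      · rw [hinc]
        exact Finset.mem_insert.mpr (Or.inl Sym2.eq_swap)
      · rw [hinc, show s(c, b) = s(b, c) from Sym2.eq_swap]
    have hfe := p4f_eq hbip hpair
    refine ⟨s(b, c), by simp, ?_, ?_, ?_, ?_⟩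
    · rw [hfe]; simp
    · rw [hfe]; exact hpair.1
    · rw [SimpleGraph.mem_edgeFinset]; exact Hbc
    · rw [hfe, SimpleGraph.mem_edgeFinset]; exact Hcd
  · have hinc : G.incidenceFinset b = {s(b, a), s(b, c)} :=
      incidence_eq_pair hdeg hbA Hab.symm Hbc hac
    have hpair : P4Pair G A s(a, b) s(b, c) := by
      refine ⟨?_, b, hbA, ?_, ?_⟩
      · intro h
        rw [Sym2.eq_iff] at h
        rcases h with ⟨h, -⟩ | ⟨-, h⟩
        · exact hab h.symm
        · exact hac h.symm
      · rw [hinc]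
        exact Finset.mem_insert.mpr (Or.inl Sym2.eq_swap)
      · rw [hinc, show s(b, a) = s(a, b) from Sym2.eq_swap]
    have hfe := p4f_eq hbip hpair
    refine ⟨s(a, b), by simp, ?_, ?_, ?_, ?_⟩
    · rw [hfe]; simp
    · rw [hfe]; exact hpair.1
    · rw [SimpleGraph.mem_edgeFinset]; exact Hab
    · rw [hfe, SimpleGraph.mem_edgeFinset]; exact Hbc
end

section
/- For every graph G and every integer k ≥ 2, Maker has a winning strategy in the arboricity-k Maker-Breaker game on E(G) if and only if k ≤ ⌈ar(G)/2⌉, where ar(G) denotes the arboricity of G. -/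
open Finset

variable {α : Type*} [DecidableEq α]

open SimpleGraph

/-- The arboricity of a finite edge set `E`: the least `n` such that `E` can be
partitioned into `n` forests. -/
noncomputable def edgeArboricity {V : Type*} (E : Finset (Sym2 V)) : ℕ :=
  sInf {n | ∃ c : Sym2 V → ℕ, (∀ e ∈ E, c e < n) ∧
    ∀ i : ℕ, (SimpleGraph.fromEdgeSet {e : Sym2 V | e ∈ E ∧ c e = i}).IsAcyclic}


open SimpleGraph


namespace ArbGame

set_option linter.unusedSectionVars false

variable {V : Type*} [DecidableEq V]

lemma acyclic_mono {s t : Set (Sym2 V)} (h : s ⊆ t) (ht : (fromEdgeSet t).IsAcyclic) :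
    (fromEdgeSet s).IsAcyclic := by
  intro v c hc
  exact ht (c.mapLe (fromEdgeSet_mono h)) (hc.mapLe _)

lemma acyclic_subsingleton {s : Set (Sym2 V)} (hs : s.Subsingleton) :
    (fromEdgeSet s).IsAcyclic := by
  intro v c hc
  have h3 := hc.three_le_length
  have hnd := hc.edges_nodup
  have hlen : c.edges.length = c.length := c.length_edges
  -- get two distinct edges
  match hE : c.edges, hnd with
  | [], _ => rw [hE] at hlen; simp at hlen; omega
  | [a], _ => rw [hE] at hlen; simp at hlen; omega
  | a :: b :: l, hnd => ?_
  have ha : a ∈ (fromEdgeSet s).edgeSet := by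
    apply c.edges_subset_edgeSet; rw [hE]; simp
  have hb : b ∈ (fromEdgeSet s).edgeSet := by
    apply c.edges_subset_edgeSet; rw [hE]; simp
  rw [edgeSet_fromEdgeSet] at ha hb
  have : a = b := hs ha.1 hb.1
  simp [this] at hnd

end ArbGame

namespace ArbGame2
set_option linter.unusedSectionVars false
open ArbGame
variable {V : Type*} [DecidableEq V]

lemma sdiff_le_fromEdgeSet {t : Set (Sym2 V)} {e : Sym2 V} :
    (fromEdgeSet t \ fromEdgeSet {e}) ≤ fromEdgeSet (t \ {e}) := by
  intro a b hab
  rw [sdiff_adj] at hab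
  obtain ⟨h1, h2⟩ := hab
  rw [fromEdgeSet_adj] at h1 ⊢
  refine ⟨⟨h1.1, ?_⟩, h1.2⟩
  intro hmem
  exact h2 (by rw [fromEdgeSet_adj]; exact ⟨hmem, h1.2⟩)

lemma reachable_of_cycle {t : Set (Sym2 V)} {u v x : V}
    (c : (fromEdgeSet t).Walk x x) (hc : c.IsCycle) (he : s(u,v) ∈ c.edges) :
    (fromEdgeSet (t \ {s(u,v)})).Reachable u v := by
  have hadj : (fromEdgeSet t).Adj u v := c.adj_of_mem_edges he
  have hnb : ¬ (fromEdgeSet t).IsBridge s(u,v) := by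
    rw [isBridge_iff_adj_and_forall_cycle_notMem hadj]
    push_neg
    exact ⟨x, c, hc, he⟩
  rw [isBridge_iff, not_not] at hnb
  exact hnb.mono sdiff_le_fromEdgeSet

/-- A cycle avoiding membership of `e` transfers down. -/
lemma no_cycle_avoid {t : Set (Sym2 V)} (ht : (fromEdgeSet t).IsAcyclic)
    {s : Set (Sym2 V)} (hsub : s ⊆ t) {x : V} (c : (fromEdgeSet s).Walk x x)
    (hc : c.IsCycle) : False :=
  (acyclic_mono hsub ht) c hc

lemma exchange {A S : Set (Sym2 V)} {u v : V} (huv : u ≠ v)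
    (hS : S ⊆ A) (he : s(u,v) ∉ A)
    (hA : (fromEdgeSet A).IsAcyclic)
    (hAe : ¬ (fromEdgeSet (insert s(u,v) A)).IsAcyclic)
    (hSe : (fromEdgeSet (insert s(u,v) S)).IsAcyclic) :
    ∃ f ∈ A, f ∉ S ∧ (fromEdgeSet (insert s(u,v) (A \ {f}))).IsAcyclic := by
  set e : Sym2 V := s(u,v) with he_def
  -- Step 1: u and v are connected in `fromEdgeSet A`.
  have reach : (fromEdgeSet A).Reachable u v := by
    rw [IsAcyclic] at hAe
    push_neg at hAe
    obtain ⟨x, c, hc⟩ := hAe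
    by_cases hec : e ∈ c.edges
    · refine (reachable_of_cycle c hc hec).mono (fromEdgeSet_mono ?_)
      intro y hy
      rcases hy with ⟨hy1, hy2⟩
      rcases Set.mem_insert_iff.mp hy1 with rfl | h
      · exact absurd rfl hy2
      · exact h
    · refine absurd (hc.transfer (q := c) ?_) (hA _)
      intro f hf
      have h1 := c.edges_subset_edgeSet hf
      rw [edgeSet_fromEdgeSet] at h1 ⊢
      obtain ⟨h1, h2⟩ := h1
      rcases Set.mem_insert_iff.mp h1 with rfl | h1
      · exact absurd hf hec
      · exact ⟨h1, h2⟩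
  obtain ⟨w⟩ := reach
  obtain ⟨p, hp⟩ := w.toPath
  have hpA : ∀ f ∈ p.edges, f ∈ A ∧ ¬ f.IsDiag := by
    intro f hf
    have h1 := p.edges_subset_edgeSet hf
    rw [edgeSet_fromEdgeSet] at h1
    exact ⟨h1.1, h1.2⟩
  have hpe : e ∉ p.edges := fun hmem => he (hpA e hmem).1
  -- Step 2: find f on p outside S
  have hfex : ∃ f ∈ p.edges, f ∉ S := by
    by_contra hall
    push_neg at hall
    have hsub : ∀ f ∈ p.edges, f ∈ ((fromEdgeSet (insert e S)) \ fromEdgeSet {e}).edgeSet := by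
      intro f hf
      rw [edgeSet_sdiff, edgeSet_fromEdgeSet, edgeSet_fromEdgeSet]
      obtain ⟨hfA, hfd⟩ := hpA f hf
      refine ⟨⟨Set.mem_insert_iff.mpr (Or.inr (hall f hf)), hfd⟩, ?_⟩
      intro hmem
      rcases hmem with ⟨hm1, _⟩
      exact hpe (by rwa [Set.mem_singleton_iff.mp hm1] at hf)
    have reach2 : ((fromEdgeSet (insert e S)) \ fromEdgeSet {e}).Reachable u v :=
      ⟨p.transfer _ hsub⟩
    have hadj : (fromEdgeSet (insert e S)).Adj u v := by
      rw [fromEdgeSet_adj]; exact ⟨Set.mem_insert _ _, huv⟩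
    have hbr := (isAcyclic_iff_forall_adj_isBridge.mp hSe) hadj
    rw [isBridge_iff] at hbr
    exact hbr reach2
  obtain ⟨f, hfp, hfS⟩ := hfex
  have hfA : f ∈ A := (hpA f hfp).1
  refine ⟨f, hfA, hfS, ?_⟩
  -- Step 3: `insert e (A \ {f})` is acyclic.
  intro x c hc
  by_cases hec : e ∈ c.edges
  · -- extract a u-v path avoiding e, transfer to fromEdgeSet A, use uniqueness
    have reach3 : (fromEdgeSet (A \ {f})).Reachable u v := by
      refine (reachable_of_cycle c hc hec).mono (fromEdgeSet_mono ?_)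
      intro y hy
      obtain ⟨hy1, hy2⟩ := hy
      rcases Set.mem_insert_iff.mp hy1 with rfl | h
      · exact absurd rfl hy2
      · exact h
    obtain ⟨w3⟩ := reach3
    obtain ⟨q, hq⟩ := w3.toPath
    have hqsub : ∀ g ∈ q.edges, g ∈ (fromEdgeSet A).edgeSet := by
      intro g hg
      have h1 := q.edges_subset_edgeSet hg
      rw [edgeSet_fromEdgeSet] at h1 ⊢
      exact ⟨h1.1.1, h1.2⟩
    have hq' : (q.transfer _ hqsub).IsPath := hq.transfer hqsub
    have huniq := hA.path_unique ⟨q.transfer _ hqsub, hq'⟩ ⟨p, hp⟩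
    have hwalk : q.transfer _ hqsub = p := Subtype.ext_iff.mp huniq
    have hedges : p.edges = q.edges := by
      rw [← hwalk]
      exact q.edges_transfer hqsub
    -- f ∈ p.edges = q.edges ⊆ A \ {f}: contradiction
    have : f ∈ q.edges := hedges ▸ hfp
    have h1 := q.edges_subset_edgeSet this
    rw [edgeSet_fromEdgeSet] at h1
    exact h1.1.2 rfl
  · -- cycle avoiding e lives in A, contradicting acyclicity
    refine absurd (hc.transfer (q := c) ?_) (hA _)
    intro g hg
    have h1 := c.edges_subset_edgeSet hg
    rw [edgeSet_fromEdgeSet] at h1 ⊢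
    obtain ⟨h1, h2⟩ := h1
    rcases Set.mem_insert_iff.mp h1 with rfl | h1
    · exact absurd hg hec
    · exact ⟨h1.1, h2⟩

end ArbGame2

namespace ArbGame3
set_option linter.unusedSectionVars false
open ArbGame ArbGame2

variable {V : Type*} [DecidableEq V]

lemma mem_arb (E : Finset (Sym2 V)) :
    ∃ c : Sym2 V → ℕ, (∀ e ∈ E, c e < edgeArboricity E) ∧
      ∀ i : ℕ, (fromEdgeSet {e : Sym2 V | e ∈ E ∧ c e = i}).IsAcyclic := by
  classical
  have hne : {n | ∃ c : Sym2 V → ℕ, (∀ e ∈ E, c e < n) ∧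
      ∀ i : ℕ, (fromEdgeSet {e : Sym2 V | e ∈ E ∧ c e = i}).IsAcyclic}.Nonempty := by
    refine ⟨E.toList.length, fun e => E.toList.idxOf e, ?_, ?_⟩
    · intro e he
      exact List.idxOf_lt_length_iff.mpr (Finset.mem_toList.mpr he)
    · intro i
      apply acyclic_subsingleton
      intro a ha b hb
      obtain ⟨haE, hai⟩ := ha
      obtain ⟨hbE, hbi⟩ := hb
      have ha' : a ∈ E.toList := Finset.mem_toList.mpr haE
      have hb' : b ∈ E.toList := Finset.mem_toList.mpr hbE
      exact (List.idxOf_inj (y := b) ha').mp (hai.trans hbi.symm)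
  exact Nat.sInf_mem hne

lemma arb_le (E : Finset (Sym2 V)) (n : ℕ) (c : Sym2 V → ℕ) (h1 : ∀ e ∈ E, c e < n)
    (h2 : ∀ i : ℕ, (fromEdgeSet {e : Sym2 V | e ∈ E ∧ c e = i}).IsAcyclic) :
    edgeArboricity E ≤ n :=
  Nat.sInf_le ⟨c, h1, h2⟩

lemma arb_mono {M N : Finset (Sym2 V)} (h : M ⊆ N) : edgeArboricity M ≤ edgeArboricity N := by
  obtain ⟨c, h1, h2⟩ := mem_arb N
  refine arb_le M _ c (fun e he => h1 e (h he)) (fun i => acyclic_mono ?_ (h2 i))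
  intro e ⟨he, hce⟩
  exact ⟨h he, hce⟩

lemma arb_union_le (X Y : Finset (Sym2 V)) :
    edgeArboricity (X ∪ Y) ≤ edgeArboricity X + edgeArboricity Y := by
  classical
  obtain ⟨cX, hX1, hX2⟩ := mem_arb X
  obtain ⟨cY, hY1, hY2⟩ := mem_arb Y
  set aX := edgeArboricity X
  refine arb_le _ _ (fun e => if e ∈ X then cX e else aX + cY e) ?_ ?_
  · intro e he
    by_cases hx : e ∈ X
    · simp only [hx, if_true]
      exact lt_of_lt_of_le (hX1 e hx) (Nat.le_add_right _ _)
    · simp only [hx, if_false]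
      have hy : e ∈ Y := by
        rcases Finset.mem_union.mp he with h | h
        · exact absurd h hx
        · exact h
      exact Nat.add_lt_add_left (hY1 e hy) _
  · intro i
    by_cases hi : i < aX
    · refine acyclic_mono ?_ (hX2 i)
      rintro e ⟨heU, hec⟩
      by_cases hx : e ∈ X
      · simp only [hx, if_true] at hec
        exact ⟨hx, hec⟩
      · simp only [hx, if_false] at hec
        omega
    · refine acyclic_mono ?_ (hY2 (i - aX))
      rintro e ⟨heU, hec⟩
      by_cases hx : e ∈ X
      · simp only [hx, if_true] at hec
        exact absurd (hec ▸ hX1 e hx) hi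
      · simp only [hx, if_false] at hec
        have hy : e ∈ Y := by
          rcases Finset.mem_union.mp heU with h | h
          · exact absurd h hx
          · exact h
        exact ⟨hy, by omega⟩

end ArbGame3

namespace ArbGame4
set_option linter.unusedSectionVars false

variable {α : Type*} [DecidableEq α] {P Q Q' : Finset α → Prop}

lemma bwin_mono (h : ∀ S, Q S → Q' S) :
    ∀ (n : ℕ) (b : Bool) (U B : Finset α), BWin Q n b U B → BWin Q' n b U B := by
  intro n
  induction n with
  | zero => intro b U B hw; exact h _ hw
  | succ n ih =>
    intro b U B hw
    cases b
    · obtain ⟨e, he, hw⟩ := hw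
      exact ⟨e, he, ih _ _ _ hw⟩
    · intro e he
      exact ih _ _ _ (hw e he)

lemma neg_mwin (P : Finset α → Prop) :
    ∀ (n : ℕ) (b : Bool) (U M B S : Finset α), U.card = n → Disjoint U M → Disjoint U B →
      Disjoint M B → S = (M ∪ U) ∪ B → ¬ MWin P n b U M →
      BWin (fun B' => ¬ P (S \ B')) n b U B := by
  intro n
  induction n with
  | zero =>
    intro b U M B S hcard hUM hUB hMB hS hM
    have hU : U = ∅ := Finset.card_eq_zero.mp hcard
    subst hU
    have hSB : S \ B = M := by
      subst hS
      ext a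
      simp only [Finset.mem_sdiff, Finset.mem_union, Finset.notMem_empty, or_false]
      constructor
      · rintro ⟨h1 | h1, h2⟩
        · exact h1
        · exact absurd h1 h2
      · intro ha
        exact ⟨Or.inl ha, fun hb => Finset.disjoint_left.mp hMB ha hb⟩
    show ¬ P (S \ B)
    rw [hSB]
    exact hM
  | succ n ih =>
    intro b U M B S hcard hUM hUB hMB hS hM
    cases b
    · -- Breaker (second player) to move
      simp only [MWin] at hM
      push_neg at hM
      obtain ⟨e, he, hM⟩ := hM
      refine ⟨e, he, ?_⟩
      refine ih true (U.erase e) M (insert e B) S ?_ ?_ ?_ ?_ ?_ hM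
      · rw [Finset.card_erase_of_mem he, hcard]; omega
      · exact Finset.disjoint_of_subset_left (Finset.erase_subset _ _) hUM
      · rw [Finset.disjoint_insert_right]
        exact ⟨Finset.notMem_erase _ _,
          Finset.disjoint_of_subset_left (Finset.erase_subset _ _) hUB⟩
      · rw [Finset.disjoint_insert_right]
        exact ⟨fun hmem => Finset.disjoint_left.mp hUM he hmem, hMB⟩
      · rw [hS]
        ext a
        by_cases hae : a = e
        · subst hae
          simp [he]
        · simp only [Finset.mem_union, Finset.mem_erase, Finset.mem_insert, hae, false_or]
          tauto
    · -- Maker (first player) to move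
      simp only [MWin] at hM
      push_neg at hM
      intro e he
      refine ih false (U.erase e) (insert e M) B S ?_ ?_ ?_ ?_ ?_ (hM e he)
      · rw [Finset.card_erase_of_mem he, hcard]; omega
      · rw [Finset.disjoint_insert_right]
        exact ⟨Finset.notMem_erase _ _,
          Finset.disjoint_of_subset_left (Finset.erase_subset _ _) hUM⟩
      · exact Finset.disjoint_of_subset_left (Finset.erase_subset _ _) hUB
      · rw [Finset.disjoint_insert_left]
        exact ⟨fun hmem => Finset.disjoint_left.mp hUB he hmem, hMB⟩
      · rw [hS]
        ext a
        by_cases hae : a = e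
        · subst hae
          simp [he]
        · simp only [Finset.mem_union, Finset.mem_erase, Finset.mem_insert, hae, false_or]
          tauto

end ArbGame4

namespace ArbGame5
set_option linter.unusedSectionVars false

variable {α : Type*} [DecidableEq α] {Q : Finset α → Prop}

lemma steal_aux (Q : Finset α → Prop) (hmono : ∀ S T : Finset α, S ⊆ T → Q S → Q T) :
    ∀ (n : ℕ) (Uf U M B : Finset α) (x : α), Uf.card = n → U = insert x Uf → x ∉ Uf →
      B ⊆ M → BWin Q Uf.card true Uf B → MWin Q U.card false U M := by
  intro n
  induction n using Nat.strong_induction_on with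
  | _ n ih =>
    intro Uf U M B x hn hU hx hBM hf
    have hUcard : U.card = n + 1 := by rw [hU, Finset.card_insert_of_notMem hx, hn]
    rw [hUcard]
    show ∀ g ∈ U, MWin Q n true (U.erase g) M
    intro g hg
    by_cases hgx : g = x
    · subst hgx
      have hUg : U.erase g = Uf := by rw [hU]; exact Finset.erase_insert hx
      rw [hUg]
      match n, hn with
      | 0, hn =>
        have hUf : Uf = ∅ := Finset.card_eq_zero.mp hn
        subst hUf
        rw [hn] at hf
        exact hmono B M hBM hf
      | (m+1), hn =>
        have : Uf.Nonempty := Finset.card_pos.mp (by omega)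
        obtain ⟨e1, he1⟩ := this
        rw [hn] at hf
        have hf1 : BWin Q m false (Uf.erase e1) B := hf e1 he1
        match m, hf1 with
        | 0, hf1 =>
          refine ⟨e1, he1, ?_⟩
          exact hmono B _ (hBM.trans (Finset.subset_insert _ _)) hf1
        | (m'+1), hf1 =>
          obtain ⟨f, hff, hf2⟩ := hf1
          have hfUf : f ∈ Uf := Finset.mem_of_mem_erase hff
          have hfe1 : f ≠ e1 := Finset.ne_of_mem_erase hff
          refine ⟨f, hfUf, ?_⟩
          have he1f : e1 ∈ Uf.erase f := Finset.mem_erase.mpr ⟨hfe1.symm, he1⟩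
          have hU' : Uf.erase f = insert e1 ((Uf.erase e1).erase f) := by
            rw [Finset.erase_right_comm, Finset.insert_erase he1f]
          have hcard' : ((Uf.erase e1).erase f).card = m' := by
            rw [Finset.card_erase_of_mem hff, Finset.card_erase_of_mem he1, hn]; omega
          have := ih m' (by omega) ((Uf.erase e1).erase f) (Uf.erase f) (insert f M)
            (insert f B) e1 hcard' hU' (by simp) (Finset.insert_subset_insert _ hBM)
            (by rwa [hcard'])
          rwa [Finset.card_erase_of_mem hfUf, hn] at this
    · have hgUf : g ∈ Uf := by
        rw [hU] at hg
        exact (Finset.mem_insert.mp hg).resolve_left hgx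
      have hUg : U.erase g = insert x (Uf.erase g) := by
        rw [hU, Finset.erase_insert_of_ne (fun h => hgx h.symm)]
      match n, hn with
      | 0, hn => exact absurd hgUf (by simp [Finset.card_eq_zero.mp hn])
      | (m+1), hn =>
        rw [hn] at hf
        have hf1 : BWin Q m false (Uf.erase g) B := hf g hgUf
        match m, hf1 with
        | 0, hf1 =>
          refine ⟨x, by rw [hUg]; exact Finset.mem_insert_self _ _, ?_⟩
          exact hmono B _ (hBM.trans (Finset.subset_insert _ _)) hf1
        | (m'+1), hf1 =>
          obtain ⟨f, hff, hf2⟩ := hf1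
          have hfUf : f ∈ Uf := Finset.mem_of_mem_erase hff
          have hfg : f ≠ g := Finset.ne_of_mem_erase hff
          have hfx : f ≠ x := fun h => hx (h ▸ hfUf)
          have hfU : f ∈ U.erase g := by
            rw [hUg]
            exact Finset.mem_insert_of_mem (Finset.mem_erase.mpr ⟨hfg, hfUf⟩)
          refine ⟨f, hfU, ?_⟩
          have hU' : (U.erase g).erase f = insert x ((Uf.erase g).erase f) := by
            rw [hUg, Finset.erase_insert_of_ne hfx.symm]
          have hcard' : ((Uf.erase g).erase f).card = m' := by
            rw [Finset.card_erase_of_mem hff, Finset.card_erase_of_mem hgUf, hn]; omega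
          have hxnot : x ∉ (Uf.erase g).erase f :=
            fun h => hx (Finset.mem_of_mem_erase (Finset.mem_of_mem_erase h))
          have := ih m' (by omega) ((Uf.erase g).erase f) ((U.erase g).erase f)
            (insert f M) (insert f B) x hcard' hU' hxnot
            (Finset.insert_subset_insert _ hBM) (by rwa [hcard'])
          rwa [Finset.card_erase_of_mem hfU, Finset.card_erase_of_mem hg, hUcard] at this

lemma steal (Q : Finset α → Prop) (hmono : ∀ S T : Finset α, S ⊆ T → Q S → Q T)
    (U : Finset α) (h : BWin Q U.card true U ∅) : MWin Q U.card true U ∅ := by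
  match hn : U.card, h with
  | 0, h => exact h
  | (n+1), h =>
    have : U.Nonempty := Finset.card_pos.mp (by omega)
    obtain ⟨e0, he0⟩ := this
    have h1 : BWin Q n false (U.erase e0) ∅ := h e0 he0
    match hm : n, h1 with
    | 0, h1 =>
      exact ⟨e0, he0, hmono ∅ _ (Finset.empty_subset _) h1⟩
    | (m+1), h1 =>
      obtain ⟨f, hff, hf2⟩ := h1
      have hfU : f ∈ U := Finset.mem_of_mem_erase hff
      have hfe0 : f ≠ e0 := Finset.ne_of_mem_erase hff
      refine ⟨f, hfU, ?_⟩
      have he0f : e0 ∈ U.erase f := Finset.mem_erase.mpr ⟨hfe0.symm, he0⟩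
      have hU' : U.erase f = insert e0 ((U.erase e0).erase f) := by
        rw [Finset.erase_right_comm, Finset.insert_erase he0f]
      have hcard' : ((U.erase e0).erase f).card = m := by
        rw [Finset.card_erase_of_mem hff, Finset.card_erase_of_mem he0, hn]; omega
      have := steal_aux Q hmono m ((U.erase e0).erase f) (U.erase f) {f} {f} e0
        hcard' hU' (by simp) (le_refl _) (by rwa [hcard'])
      rwa [Finset.card_erase_of_mem hfU, hn] at this

end ArbGame5

namespace ArbGame6
set_option linter.unusedSectionVars false
set_option linter.unusedVariables false
open ArbGame ArbGame2 ArbGame3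

variable {V : Type*} [DecidableEq V]

lemma exchange' {A S : Set (Sym2 V)} {e : Sym2 V} (hd : ¬ e.IsDiag)
    (hS : S ⊆ A) (he : e ∉ A)
    (hA : (fromEdgeSet A).IsAcyclic)
    (hAe : ¬ (fromEdgeSet (insert e A)).IsAcyclic)
    (hSe : (fromEdgeSet (insert e S)).IsAcyclic) :
    ∃ f ∈ A, f ∉ S ∧ (fromEdgeSet (insert e (A \ {f}))).IsAcyclic := by
  induction e using Sym2.ind with
  | _ u v =>
    have huv : u ≠ v := by simpa [Sym2.mk_isDiag_iff] using hd
    exact exchange huv hS he hA hAe hSe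

def Inv (E : Finset (Sym2 V)) (c : Sym2 V → ℕ) (U M : Finset (Sym2 V))
    (A1 A2 : ℕ → Finset (Sym2 V)) : Prop :=
  U ⊆ E ∧ M ⊆ E ∧ Disjoint U M ∧
  ∀ i : ℕ, A1 i ∪ A2 i = (M ∪ U).filter (fun e => c e / 2 = i) ∧
    A1 i ∩ A2 i = M.filter (fun e => c e / 2 = i) ∧
    (fromEdgeSet (A1 i : Set (Sym2 V))).IsAcyclic ∧
    (fromEdgeSet (A2 i : Set (Sym2 V))).IsAcyclic

lemma inv_swap {E : Finset (Sym2 V)} {c : Sym2 V → ℕ} {U M A1 A2}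
    (h : Inv E c U M A1 A2) : Inv E c U M A2 A1 := by
  obtain ⟨h1, h2, h3, h4⟩ := h
  refine ⟨h1, h2, h3, fun i => ?_⟩
  obtain ⟨g1, g2, g3, g4⟩ := h4 i
  exact ⟨by rwa [Finset.union_comm], by rwa [Finset.inter_comm], g4, g3⟩

lemma not_both {E : Finset (Sym2 V)} {c : Sym2 V → ℕ} {U M A1 A2}
    (h : Inv E c U M A1 A2) {g : Sym2 V} (hgM : g ∉ M) {i : ℕ}
    (h1 : g ∈ A1 i) (h2 : g ∈ A2 i) : False := by
  have := (h.2.2.2 i).2.1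
  have hg : g ∈ M.filter (fun e => c e / 2 = i) := this ▸ Finset.mem_inter.mpr ⟨h1, h2⟩
  exact hgM (Finset.mem_filter.mp hg).1

lemma mem_side {E : Finset (Sym2 V)} {c : Sym2 V → ℕ} {U M A1 A2}
    (h : Inv E c U M A1 A2) {g : Sym2 V} {i : ℕ} (hg : g ∈ A1 i) :
    g ∈ M ∪ U ∧ c g / 2 = i := by
  have := (h.2.2.2 i).1
  have hm : g ∈ (M ∪ U).filter (fun e => c e / 2 = i) :=
    this ▸ Finset.mem_union_left _ hg
  exact ⟨(Finset.mem_filter.mp hm).1, (Finset.mem_filter.mp hm).2⟩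

lemma breaker_erase {E : Finset (Sym2 V)} {c : Sym2 V → ℕ} {U M A1 A2}
    (h : Inv E c U M A1 A2) {g : Sym2 V} (hg : g ∈ U) :
    ∃ A1' A2', Inv E c (U.erase g) M A1' A2' := by
  have hgM : g ∉ M := Finset.disjoint_left.mp h.2.2.1 hg
  have hgmem : g ∈ A1 (c g / 2) ∪ A2 (c g / 2) := by
    rw [(h.2.2.2 _).1]
    exact Finset.mem_filter.mpr ⟨Finset.mem_union_right _ hg, rfl⟩
  suffices hside : ∀ B1 B2 : ℕ → Finset (Sym2 V), Inv E c U M B1 B2 → g ∈ B1 (c g / 2) →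
      ∃ A1' A2', Inv E c (U.erase g) M A1' A2' by
    rcases Finset.mem_union.mp hgmem with hmem | hmem
    · exact hside A1 A2 h hmem
    · exact hside A2 A1 (inv_swap h) hmem
  intro B1 B2 hI hgB
  obtain ⟨k1, k2, k3, k4⟩ := hI
  have hgB2 : g ∉ B2 (c g / 2) := fun h2 => not_both ⟨k1, k2, k3, k4⟩ hgM hgB h2
  refine ⟨Function.update B1 (c g / 2) ((B1 (c g / 2)).erase g), B2,
    (Finset.erase_subset _ _).trans k1, k2,
    Finset.disjoint_of_subset_left (Finset.erase_subset _ _) k3, fun i => ?_⟩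
  obtain ⟨j1, j2, j3, j4⟩ := k4 i
  by_cases hij : i = c g / 2
  · subst hij
    rw [Function.update_self]
    refine ⟨?_, ?_, acyclic_mono (by simp [Finset.erase_subset]) j3, j4⟩
    · ext x
      have hx := Finset.ext_iff.mp j1 x
      by_cases hxg : x = g
      · subst hxg
        simp [hgB2, hgM]
      · simp only [Finset.mem_union, Finset.mem_erase, Finset.mem_filter, hxg,
          not_false_iff, true_and, Ne, false_or] at hx ⊢
        simpa [hxg] using hx
    · ext x
      have hx := Finset.ext_iff.mp j2 x
      by_cases hxg : x = g
      · subst hxg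
        simp [hgB2, hgM]
      · simp only [Finset.mem_inter, Finset.mem_erase, Finset.mem_filter, hxg,
          not_false_iff, true_and, Ne, false_or] at hx ⊢
        simpa [hxg] using hx
  · rw [Function.update_of_ne hij]
    refine ⟨?_, j2, j3, j4⟩
    rw [j1]
    ext x
    by_cases hxg : x = g
    · subst hxg
      simp only [Finset.mem_filter]
      constructor
      · rintro ⟨_, hc⟩; exact absurd hc.symm (by simpa using hij)
      · rintro ⟨_, hc⟩; exact absurd hc.symm (by simpa using hij)
    · simp [Finset.mem_filter, Finset.mem_union, Finset.mem_erase, hxg]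

end ArbGame6

namespace ArbGame7
set_option linter.unusedSectionVars false
set_option linter.unusedVariables false
open ArbGame ArbGame2 ArbGame3 ArbGame6

variable {V : Type*} [DecidableEq V]

lemma terminal {k : ℕ} (hk : 2 ≤ k) {E : Finset (Sym2 V)} {c : Sym2 V → ℕ}
    (hcE : ∀ e ∈ E, c e < 2*k-2) {M : Finset (Sym2 V)} (hME : M ⊆ E)
    (hac : ∀ i : ℕ,
      (fromEdgeSet ((M.filter (fun e => c e / 2 = i)) : Set (Sym2 V))).IsAcyclic) :
    ¬ (k ≤ edgeArboricity M) := by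
  have hle : edgeArboricity M ≤ k - 1 := by
    refine arb_le _ _ (fun e => c e / 2) ?_ ?_
    · intro e he
      have := hcE e (hME he)
      show c e / 2 < k - 1
      omega
    · intro i
      refine acyclic_mono ?_ (hac i)
      rintro e ⟨he, hce⟩
      simp only [Finset.coe_filter, Set.mem_setOf_eq]
      exact ⟨he, hce⟩
  omega

lemma breaker_main {k : ℕ} (hk : 2 ≤ k) {E : Finset (Sym2 V)} {c : Sym2 V → ℕ}
    (hcE : ∀ e ∈ E, c e < 2*k-2) (hdiag : ∀ e ∈ E, ¬ e.IsDiag) :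
    ∀ (n : ℕ) (U M : Finset (Sym2 V)) (A1 A2 : ℕ → Finset (Sym2 V)), U.card = n →
      Inv E c U M A1 A2 →
      ¬ MWin (fun M' => k ≤ edgeArboricity M') n true U M := by
  intro n
  induction n using Nat.strong_induction_on with
  | _ n ih =>
    intro U M A1 A2 hcard hI hMW
    -- terminal helper from an invariant
    have hterm : ∀ (M' : Finset (Sym2 V)) (U' : Finset (Sym2 V))
        (B1 B2 : ℕ → Finset (Sym2 V)), Inv E c U' M' B1 B2 →
        ¬ (k ≤ edgeArboricity M') := by
      intro M' U' B1 B2 hI'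
      refine terminal hk hcE hI'.2.1 ?_
      intro i
      have h2 := (hI'.2.2.2 i).2.1
      refine acyclic_mono ?_ ((hI'.2.2.2 i).2.2.1)
      intro x hx
      simp only [Finset.coe_filter, Set.mem_setOf_eq] at hx
      have : x ∈ B1 i ∩ B2 i := h2 ▸ Finset.mem_filter.mpr hx
      simpa using (Finset.mem_inter.mp this).1
    match n, hcard, hMW with
    | 0, hcard, hMW =>
      exact hterm M U A1 A2 hI hMW
    | (m+1), hcard, hMW =>
      obtain ⟨e, he, hMW⟩ := hMW
      have heE : e ∈ E := hI.1 he
      have heM : e ∉ M := Finset.disjoint_left.mp hI.2.2.1 he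
      have hemem : e ∈ A1 (c e / 2) ∪ A2 (c e / 2) := by
        rw [(hI.2.2.2 _).1]
        exact Finset.mem_filter.mpr ⟨Finset.mem_union_right _ he, rfl⟩
      -- symmetric key argument: e is on side B2, not on side B1
      have key : ∀ B1 B2 : ℕ → Finset (Sym2 V), Inv E c U M B1 B2 →
          e ∈ B2 (c e / 2) → e ∉ B1 (c e / 2) → False := by
        intro B1 B2 hI2 he2 hne1
        obtain ⟨k1, k2, k3, k4⟩ := hI2
        obtain ⟨j1, j2, j3, j4⟩ := k4 (c e / 2)
        -- the invariant after Maker claims e, with e added to side B1 (possibly after exchange)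
        by_cases hac : (fromEdgeSet ((insert e (B1 (c e / 2)) : Finset (Sym2 V)) :
            Set (Sym2 V))).IsAcyclic
        · -- no exchange needed
          have hI' : Inv E c (U.erase e) (insert e M)
              (Function.update B1 (c e / 2) (insert e (B1 (c e / 2)))) B2 := by
            refine ⟨(Finset.erase_subset _ _).trans k1, Finset.insert_subset heE k2, ?_,
              fun i => ?_⟩
            · rw [Finset.disjoint_insert_right]
              exact ⟨Finset.notMem_erase _ _,
                Finset.disjoint_of_subset_left (Finset.erase_subset _ _) k3⟩
            · obtain ⟨l1, l2, l3, l4⟩ := k4 i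
              by_cases hij : i = c e / 2
              · subst hij
                rw [Function.update_self]
                refine ⟨?_, ?_, hac, l4⟩
                · ext x
                  have hx := Finset.ext_iff.mp l1 x
                  by_cases hxe : x = e
                  · subst hxe
                    simp [he, heM]
                  · simp only [Finset.mem_union, Finset.mem_insert, Finset.mem_filter,
                      Finset.mem_erase, hxe, false_or, Ne, not_false_iff, true_and] at hx ⊢
                    simpa [hxe] using hx
                · ext x
                  have hx := Finset.ext_iff.mp l2 x
                  by_cases hxe : x = e
                  · subst hxe
                    simp [he2]
                  · simp only [Finset.mem_inter, Finset.mem_insert, Finset.mem_filter,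
                      hxe, false_or] at hx ⊢
                    simpa [hxe] using hx
              · rw [Function.update_of_ne hij]
                refine ⟨?_, ?_, l3, l4⟩
                · rw [l1]
                  ext x
                  by_cases hxe : x = e
                  · subst hxe
                    simp only [Finset.mem_filter]
                    constructor
                    · rintro ⟨_, hc2⟩; exact absurd hc2.symm (by simpa using hij)
                    · rintro ⟨_, hc2⟩; exact absurd hc2.symm (by simpa using hij)
                  · simp [Finset.mem_filter, Finset.mem_union, Finset.mem_erase,
                      Finset.mem_insert, hxe]
                · rw [l2]
                  ext x
                  by_cases hxe : x = e
                  · subst hxe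
                    simp only [Finset.mem_filter]
                    constructor
                    · intro h'; exact absurd h'.2.symm (by simpa using hij)
                    · rintro ⟨_, hc2⟩; exact absurd hc2.symm (by simpa using hij)
                  · simp [Finset.mem_filter, Finset.mem_insert, hxe]
          match m, hcard, hMW with
          | 0, hcard, hMW =>
            exact hterm _ _ _ _ hI' hMW
          | (m'+1), hcard, hMW =>
            have hne : (U.erase e).Nonempty := by
              rw [← Finset.card_pos, Finset.card_erase_of_mem he]
              omega
            obtain ⟨g, hgU⟩ := hne
            obtain ⟨C1, C2, hI''⟩ := breaker_erase hI' hgU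
            refine ih m' (by omega) _ _ C1 C2 ?_ hI'' (hMW g hgU)
            rw [Finset.card_erase_of_mem hgU, Finset.card_erase_of_mem he]
            omega
        · -- exchange: find f to remove from side B1
          have hSsub : ((B1 (c e / 2) ∩ B2 (c e / 2) : Finset (Sym2 V)) : Set (Sym2 V)) ⊆
              (B1 (c e / 2) : Set (Sym2 V)) := by
            intro x hx
            simp only [Finset.coe_inter, Set.mem_inter_iff] at hx
            exact hx.1
          have hSe : (fromEdgeSet (insert e ((B1 (c e / 2) ∩ B2 (c e / 2) : Finset (Sym2 V)) :
              Set (Sym2 V)))).IsAcyclic := by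
            refine acyclic_mono ?_ j4
            intro x hx
            rcases Set.mem_insert_iff.mp hx with rfl | hx
            · exact he2
            · simp only [Finset.coe_inter, Set.mem_inter_iff] at hx
              exact hx.2
          have hAe : ¬ (fromEdgeSet (insert e (↑(B1 (c e / 2)) : Set (Sym2 V)))).IsAcyclic := by
            intro hcon
            exact hac (by rwa [Finset.coe_insert])
          obtain ⟨f, hfA, hfS, hfac⟩ := exchange' (hdiag e heE) hSsub
            (by simpa using hne1) j3 hAe hSe
          have hfB1 : f ∈ B1 (c e / 2) := by simpa using hfA
          have hfM : f ∉ M := by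
            intro hfM
            refine hfS ?_
            have hcf : c f / 2 = c e / 2 := (mem_side ⟨k1, k2, k3, k4⟩ hfB1).2
            have : f ∈ M.filter (fun x => c x / 2 = c e / 2) :=
              Finset.mem_filter.mpr ⟨hfM, hcf⟩
            rw [← j2] at this
            simpa using this
          have hfU : f ∈ U := by
            rcases Finset.mem_union.mp (mem_side ⟨k1, k2, k3, k4⟩ hfB1).1 with h' | h'
            · exact absurd h' hfM
            · exact h'
          have hfe : f ≠ e := fun h' => hne1 (h' ▸ hfB1)
          have hfUe : f ∈ U.erase e := Finset.mem_erase.mpr ⟨hfe, hfU⟩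
          match m, hcard, hMW with
          | 0, hcard, hMW =>
            have hUe0 : (U.erase e).card = 0 := by
              rw [Finset.card_erase_of_mem he]; omega
            exact absurd hfUe (by rw [Finset.card_eq_zero.mp hUe0]; simp)
          | (m'+1), hcard, hMW =>
            -- Breaker answers f
            have hfac' : (fromEdgeSet ((insert e ((B1 (c e / 2)).erase f) : Finset (Sym2 V)) :
                Set (Sym2 V))).IsAcyclic := by
              rw [Finset.coe_insert, Finset.coe_erase]
              exact hfac
            have hI' : Inv E c ((U.erase e).erase f) (insert e M)
                (Function.update B1 (c e / 2) (insert e ((B1 (c e / 2)).erase f))) B2 := by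
              have hfB2 : f ∉ B2 (c e / 2) := by
                intro hfB2
                exact hfS (by simp [hfB1, hfB2])
              refine ⟨((Finset.erase_subset _ _).trans (Finset.erase_subset _ _)).trans k1,
                Finset.insert_subset heE k2, ?_, fun i => ?_⟩
              · rw [Finset.disjoint_insert_right]
                refine ⟨fun hmem => ?_, Finset.disjoint_of_subset_left
                  ((Finset.erase_subset _ _).trans (Finset.erase_subset _ _)) k3⟩
                exact Finset.notMem_erase e (U) (Finset.mem_of_mem_erase hmem)
              · obtain ⟨l1, l2, l3, l4⟩ := k4 i
                by_cases hij : i = c e / 2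
                · subst hij
                  rw [Function.update_self]
                  refine ⟨?_, ?_, hfac', l4⟩
                  · ext x
                    have hx := Finset.ext_iff.mp l1 x
                    by_cases hxe : x = e
                    · subst hxe
                      simp [he2, Finset.mem_erase, heM]
                    · by_cases hxf : x = f
                      · subst hxf
                        simp only [Finset.mem_union, Finset.mem_insert, Finset.mem_erase,
                          hxe, false_or, Finset.mem_filter] at hx ⊢
                        simp [hfB2, hfM, hxe, hx]
                      · simp only [Finset.mem_union, Finset.mem_insert, Finset.mem_erase,
                          Finset.mem_filter, hxe, hxf, false_or, Ne, not_false_iff,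
                          true_and] at hx ⊢
                        simpa [hxe, hxf] using hx
                  · ext x
                    have hx := Finset.ext_iff.mp l2 x
                    by_cases hxe : x = e
                    · subst hxe
                      simp [he2]
                    · by_cases hxf : x = f
                      · subst hxf
                        simp only [Finset.mem_inter, Finset.mem_insert, Finset.mem_erase,
                          Finset.mem_filter, hxe, false_or] at hx ⊢
                        simp [hfB2, hfM, hxe]
                      · simp only [Finset.mem_inter, Finset.mem_insert, Finset.mem_erase,
                          Finset.mem_filter, hxe, hxf, false_or, Ne, not_false_iff,
                          true_and] at hx ⊢
                        simpa [hxe, hxf] using hx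
                · rw [Function.update_of_ne hij]
                  have hcf : c f / 2 = c e / 2 := (mem_side ⟨k1, k2, k3, k4⟩ hfB1).2
                  refine ⟨?_, ?_, l3, l4⟩
                  · rw [l1]
                    ext x
                    by_cases hxe : x = e
                    · subst hxe
                      simp only [Finset.mem_filter]
                      constructor
                      · rintro ⟨_, hc2⟩; exact absurd hc2.symm (by simpa using hij)
                      · rintro ⟨_, hc2⟩; exact absurd hc2.symm (by simpa using hij)
                    · by_cases hxf : x = f
                      · subst hxf
                        simp only [Finset.mem_filter]
                        constructor
                        · rintro ⟨_, hc2⟩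
                          exact absurd (hcf ▸ hc2).symm (by simpa using hij)
                        · rintro ⟨_, hc2⟩
                          exact absurd (hcf ▸ hc2).symm (by simpa using hij)
                      · simp [Finset.mem_filter, Finset.mem_union, Finset.mem_erase,
                          Finset.mem_insert, hxe, hxf]
                  · rw [l2]
                    ext x
                    by_cases hxe : x = e
                    · subst hxe
                      simp only [Finset.mem_filter]
                      constructor
                      · intro h'; exact absurd h'.2.symm (by simpa using hij)
                      · rintro ⟨_, hc2⟩; exact absurd hc2.symm (by simpa using hij)
                    · simp [Finset.mem_filter, Finset.mem_insert, hxe]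
            refine ih m' (by omega) _ _ _ _ ?_ hI' (hMW f hfUe)
            rw [Finset.card_erase_of_mem hfUe, Finset.card_erase_of_mem he]
            omega
      rcases Finset.mem_union.mp hemem with hmem | hmem
      · refine key A2 A1 (inv_swap hI) hmem (fun hcon => ?_)
        exact not_both hI heM hmem hcon
      · refine key A1 A2 hI hmem (fun hcon => ?_)
        exact not_both hI heM hcon hmem

end ArbGame7

open ArbGame ArbGame2 ArbGame3 ArbGame4 ArbGame5 ArbGame6 ArbGame7

/-- **The arboricity-`k` game.** For every graph `G` and `k ≥ 2`, Maker wins the game on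
`E(G)` in which she wins iff her final claimed edge set has arboricity at least `k`, if
and only if `k ≤ ⌈ar(G)/2⌉`. -/
theorem stmt12 {V : Type*} [Fintype V] [DecidableEq V]
    (G : SimpleGraph V) [DecidableRel G.Adj] (k : ℕ) (hk : 2 ≤ k) :
    MWin (fun M => k ≤ edgeArboricity M) G.edgeFinset.card true G.edgeFinset ∅ ↔
      k ≤ (edgeArboricity G.edgeFinset + 1) / 2 := by
  classical
  constructor
  · intro hMW
    by_contra hlt
    push_neg at hlt
    have hbound : edgeArboricity G.edgeFinset ≤ 2*k-2 := by omega
    obtain ⟨c, hc1, hc2⟩ := mem_arb G.edgeFinset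
    have hcE : ∀ e ∈ G.edgeFinset, c e < 2*k-2 :=
      fun e he => lt_of_lt_of_le (hc1 e he) hbound
    have hdiag : ∀ e ∈ G.edgeFinset, ¬ e.IsDiag := fun e he =>
      G.not_isDiag_of_mem_edgeSet (SimpleGraph.mem_edgeFinset.mp he)
    have hInv : Inv G.edgeFinset c G.edgeFinset ∅
        (fun i => G.edgeFinset.filter (fun e => c e = 2*i))
        (fun i => G.edgeFinset.filter (fun e => c e = 2*i+1)) := by
      refine ⟨subset_rfl, Finset.empty_subset _, Finset.disjoint_empty_right _, fun i => ?_⟩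
      dsimp only
      refine ⟨?_, ?_, ?_, ?_⟩
      · rw [Finset.empty_union]
        ext x
        simp only [Finset.mem_union, Finset.mem_filter]
        constructor
        · intro hx
          rcases hx with ⟨hx1, hx2⟩ | ⟨hx1, hx2⟩ <;> exact ⟨hx1, by omega⟩
        · intro hx
          obtain ⟨hx1, hx2⟩ := hx
          by_cases hcx : c x = 2*i
          · exact Or.inl ⟨hx1, hcx⟩
          · exact Or.inr ⟨hx1, by omega⟩
      · rw [Finset.filter_empty]
        ext x
        simp only [Finset.mem_inter, Finset.mem_filter, Finset.notMem_empty, iff_false,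
          not_and]
        intros
        omega
      · refine acyclic_mono ?_ (hc2 (2*i))
        intro x hx
        simp only [Finset.coe_filter, Set.mem_setOf_eq] at hx
        exact ⟨hx.1, hx.2⟩
      · refine acyclic_mono ?_ (hc2 (2*i+1))
        intro x hx
        simp only [Finset.coe_filter, Set.mem_setOf_eq] at hx
        exact ⟨hx.1, hx.2⟩
    exact breaker_main hk hcE hdiag _ _ _ _ _ rfl hInv hMW
  · intro hge
    have h2k : 2*k - 1 ≤ edgeArboricity G.edgeFinset := by omega
    by_contra hM
    have hB := neg_mwin (fun M => k ≤ edgeArboricity M) G.edgeFinset.card true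
      G.edgeFinset ∅ ∅ G.edgeFinset rfl (by simp) (by simp) (by simp) (by simp) hM
    have hpoint : ∀ S : Finset (Sym2 V),
        (¬ (k ≤ edgeArboricity (G.edgeFinset \ S))) → k ≤ edgeArboricity S := by
      intro S hS
      have hun : (G.edgeFinset \ S) ∪ (G.edgeFinset ∩ S) = G.edgeFinset := by
        ext x
        simp only [Finset.mem_union, Finset.mem_sdiff, Finset.mem_inter]
        tauto
      have h1 : edgeArboricity G.edgeFinset ≤
          edgeArboricity (G.edgeFinset \ S) + edgeArboricity (G.edgeFinset ∩ S) := by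
        conv_lhs => rw [← hun]
        exact arb_union_le _ _
      have h2 : edgeArboricity (G.edgeFinset ∩ S) ≤ edgeArboricity S :=
        arb_mono Finset.inter_subset_right
      omega
    have hB2 := bwin_mono hpoint _ true G.edgeFinset ∅ hB
    exact hM (steal _ (fun S T hST h => le_trans h (arb_mono hST)) _ hB2)
end
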